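/- arXiv:2001.08351 — 10 statements merged into one kernel-verified Lean document; each statement's English description precedes it below -/
import Mathlib

section
/- For all integers n ≥ 0, c_{9,2}(3n+2) ≡ 0 (mod 27). -/
/-- The number of (k,j)-colored partitions of n: for each partition of n, each
part size with multiplicity m contributes a factor counting the ways to color
its parts with at most j of the k colors. -/
def ckj (k j n : ℕ) : ℕ :=
  ∑ P : n.Partition, ∏ s ∈ P.parts.toFinset,
    ∑ i ∈ Finset.Icc 1 j, Nat.choose k i * Nat.choose (P.parts.count s - 1) (i - 1)

private lemma F_eq (m : ℕ) :
    (∑ i ∈ Finset.Icc 1 2, Nat.choose 9 i * Nat.choose (m - 1) (i - 1))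
      = 9 + 36 * (m - 1) := by
  have h : Finset.Icc 1 2 = ({1, 2} : Finset ℕ) := by decide
  rw [h, Finset.sum_pair (by norm_num : (1:ℕ) ≠ 2)]
  simp [Nat.choose_one_right]
  exact Or.inl rfl

private lemma zmod3_key : ∀ x y : ZMod 3, x * y = 2 → x + y = 0 := by decide

private lemma zmod3_sq : ∀ x : ZMod 3, x * x ≠ 2 := by decide

/-- The sum of divisors of `N ≡ 2 (mod 3)` vanishes mod 3, by the
fixed-point-free involution `d ↦ N / d`. -/
private lemma divisor_sum_zmod3 {N : ℕ} (hN : (N : ZMod 3) = 2) :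
    ∑ d ∈ N.divisors, (d : ZMod 3) = 0 := by
  have hN0 : N ≠ 0 := by
    rintro rfl
    simp at hN
    exact absurd hN (by decide)
  have hmul : ∀ d ∈ N.divisors, (d : ZMod 3) * ((N / d : ℕ) : ZMod 3) = 2 := by
    intro d hd
    rw [← Nat.cast_mul, Nat.mul_div_cancel' (Nat.mem_divisors.1 hd).1, hN]
  refine Finset.sum_involution (fun d _ => N / d) ?_ ?_ ?_ ?_
  · intro d hd
    exact zmod3_key _ _ (hmul d hd)
  · intro d hd _ heq
    have h2 := hmul d hd
    have heq' : N / d = d := heq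
    rw [heq'] at h2
    exact zmod3_sq _ h2
  · intro d hd
    exact Nat.mem_divisors.2 ⟨Nat.div_dvd_of_dvd (Nat.mem_divisors.1 hd).1, hN0⟩
  · intro d hd
    exact Nat.div_div_self (Nat.mem_divisors.1 hd).1 hN0

private lemma single_size {N : ℕ} (P : N.Partition) (h : P.parts.toFinset.card = 1) :
    ∃ s, P.parts = Multiset.replicate (Multiset.card P.parts) s ∧
      P.parts.toFinset = {s} := by
  obtain ⟨s, hs⟩ := Finset.card_eq_one.1 h
  refine ⟨s, ?_, hs⟩
  rw [Multiset.eq_replicate_card]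
  intro b hb
  have := Multiset.mem_toFinset.2 hb
  rw [hs, Finset.mem_singleton] at this
  exact this

theorem c92_congruence (n : ℕ) : ckj 9 2 (3 * n + 2) ≡ 0 [MOD 27] := by
  set N := 3 * n + 2 with hNdef
  have hN0 : N ≠ 0 := by omega
  rw [Nat.modEq_zero_iff_dvd, ← ZMod.natCast_eq_zero_iff]
  rw [ckj, Nat.cast_sum]
  simp only [F_eq]
  -- partitions with at least two distinct part sizes contribute 0 mod 27
  have hzero : ∀ P : N.Partition, P.parts.toFinset.card ≠ 1 →
      ((∏ s ∈ P.parts.toFinset, (9 + 36 * (P.parts.count s - 1)) : ℕ) : ZMod 27) = 0 := by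
    intro P hcard
    have hne : P.parts ≠ 0 := by
      intro h
      have h2 := P.parts_sum
      rw [h] at h2
      simp at h2
    have hcard1 : 1 ≤ P.parts.toFinset.card := by
      rw [Nat.one_le_iff_ne_zero, Ne, Finset.card_eq_zero]
      intro h
      obtain ⟨a, ha⟩ := Multiset.exists_mem_of_ne_zero hne
      have : a ∈ P.parts.toFinset := Multiset.mem_toFinset.2 ha
      rw [h] at this
      simp at this
    have hcard2 : 2 ≤ P.parts.toFinset.card := by omega
    rw [ZMod.natCast_eq_zero_iff]
    have hdvd : ∏ _s ∈ P.parts.toFinset, (9:ℕ) ∣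
        ∏ s ∈ P.parts.toFinset, (9 + 36 * (P.parts.count s - 1)) :=
      Finset.prod_dvd_prod_of_dvd _ _
        (fun s _ => ⟨1 + 4 * (P.parts.count s - 1), by ring⟩)
    rw [Finset.prod_const] at hdvd
    refine dvd_trans (dvd_trans ?_ (pow_dvd_pow 9 hcard2)) hdvd
    norm_num
  rw [← Finset.sum_filter_of_ne
    (p := fun P : N.Partition => P.parts.toFinset.card = 1)
    (fun P _ h => by_contra fun hc => h (hzero P hc))]
  -- biject single-size partitions with divisors
  have hbij : ∑ P ∈ Finset.univ.filter
        (fun P : N.Partition => P.parts.toFinset.card = 1),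
      ((∏ s ∈ P.parts.toFinset, (9 + 36 * (P.parts.count s - 1)) : ℕ) : ZMod 27)
      = ∑ m ∈ N.divisors, ((9 + 36 * (m - 1) : ℕ) : ZMod 27) := by
    refine Finset.sum_bij' (fun P _ => Multiset.card P.parts)
      (fun m hm => ⟨Multiset.replicate m (N / m), ?_, ?_⟩) ?_ ?_ ?_ ?_ ?_
    · -- parts_pos
      intro i hi
      rw [Multiset.eq_of_mem_replicate hi]
      have hd := (Nat.mem_divisors.1 hm).1
      exact Nat.div_pos (Nat.le_of_dvd (Nat.pos_of_ne_zero hN0) hd)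
        (Nat.pos_of_mem_divisors hm)
    · -- parts_sum
      rw [Multiset.sum_replicate, smul_eq_mul,
        Nat.mul_div_cancel' (Nat.mem_divisors.1 hm).1]
    · -- i maps into divisors
      intro P hP
      rw [Finset.mem_filter] at hP
      obtain ⟨s, hrep, _⟩ := single_size P hP.2
      have hsum := P.parts_sum
      rw [hrep, Multiset.sum_replicate, smul_eq_mul] at hsum
      exact Nat.mem_divisors.2 ⟨⟨s, hsum.symm⟩, hN0⟩
    · -- j maps into filter
      intro m hm
      rw [Finset.mem_filter]
      refine ⟨Finset.mem_univ _, ?_⟩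
      show (Multiset.replicate m (N / m)).toFinset.card = 1
      rw [Multiset.toFinset_replicate,
        if_neg (Nat.pos_of_mem_divisors hm).ne']
      exact Finset.card_singleton _
    · -- left inverse
      intro P hP
      rw [Finset.mem_filter] at hP
      obtain ⟨s, hrep, _⟩ := single_size P hP.2
      have hsum := P.parts_sum
      rw [hrep, Multiset.sum_replicate, smul_eq_mul] at hsum
      have hc0 : 0 < Multiset.card P.parts := by
        rcases Nat.eq_zero_or_pos (Multiset.card P.parts) with h | h
        · exfalso; rw [h] at hsum; omega
        · exact h
      have hs : N / Multiset.card P.parts = s :=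
        Nat.div_eq_of_eq_mul_left hc0 (by rw [Nat.mul_comm]; exact hsum.symm)
      apply Nat.Partition.ext
      show Multiset.replicate (Multiset.card P.parts)
        (N / Multiset.card P.parts) = P.parts
      rw [hs]
      exact hrep.symm
    · -- right inverse
      intro m hm
      exact Multiset.card_replicate _ _
    · -- values agree
      intro P hP
      rw [Finset.mem_filter] at hP
      obtain ⟨s, hrep, htf⟩ := single_size P hP.2
      rw [htf, Finset.prod_singleton]
      congr 2
      conv_lhs => rw [hrep]
      rw [Multiset.count_replicate_self]
  rw [hbij, ← Nat.cast_sum, ZMod.natCast_eq_zero_iff]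
  -- the divisor sum is divisible by 27
  have hfac : ∑ m ∈ N.divisors, (9 + 36 * (m - 1))
      = 9 * ∑ m ∈ N.divisors, (1 + 4 * (m - 1)) := by
    rw [Finset.mul_sum]
    exact Finset.sum_congr rfl fun m _ => by ring
  rw [hfac]
  have h3 : (3:ℕ) ∣ ∑ m ∈ N.divisors, (1 + 4 * (m - 1)) := by
    rw [← ZMod.natCast_eq_zero_iff, Nat.cast_sum]
    have hcast : ∀ m ∈ N.divisors, ((1 + 4 * (m - 1) : ℕ) : ZMod 3) = (m : ZMod 3) := by
      intro m hm
      obtain ⟨k, rfl⟩ : ∃ k, m = k + 1 :=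
        ⟨m - 1, by have := Nat.pos_of_mem_divisors hm; omega⟩
      push_cast
      rw [show (4 : ZMod 3) = 1 from rfl]
      ring
    rw [Finset.sum_congr rfl hcast]
    apply divisor_sum_zmod3
    rw [hNdef]
    push_cast
    rw [show (3 : ZMod 3) = 0 from rfl]
    ring
  obtain ⟨t, ht⟩ := h3
  exact ⟨t, by rw [ht]; ring⟩
end

section
/- For all integers n ≥ 0, c_{9,5}(3n+2) ≡ 0 (mod 27). -/
namespace C95Aux

/-- The weight of a part size with multiplicity `m` in a (9,5)-colored partition. -/
def w (m : ℕ) : ℕ := ∑ i ∈ Finset.Icc 1 5, Nat.choose 9 i * Nat.choose (m - 1) (i - 1)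

lemma w_eq (m : ℕ) : w (m+1) =
    9 + 36 * (m.choose 1) + 84 * (m.choose 2) + 126 * (m.choose 3) + 126 * (m.choose 4) := by
  unfold w
  rw [show Finset.Icc 1 5 = ({1,2,3,4,5} : Finset ℕ) from by decide]
  simp [Finset.sum_insert, Nat.choose]
  ring

lemma wstep (m : ℕ) : w (m+4) =
    w (m+1) + 27 * (18 + 28 * m + 28 * (m.choose 2) + 14 * (m.choose 3)) := by
  have h2 : ∀ x : ℕ, (x+1).choose 2 = x.choose 2 + x := by
    intro x; rw [Nat.choose_succ_succ, Nat.choose_one_right, Nat.add_comm]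
  have h3 : ∀ x : ℕ, (x+1).choose 3 = x.choose 3 + x.choose 2 := by
    intro x; rw [Nat.choose_succ_succ, Nat.add_comm]
  have h4 : ∀ x : ℕ, (x+1).choose 4 = x.choose 4 + x.choose 3 := by
    intro x; rw [Nat.choose_succ_succ, Nat.add_comm]
  rw [show m+4 = (m+3)+1 from rfl, w_eq, w_eq]
  rw [show m+3 = (m+2)+1 from rfl, h2, h3, h4,
      show m+2 = (m+1)+1 from rfl, h2, h3, h4, h2, h3, h4]
  simp [Nat.choose_one_right]
  ring

lemma wmod (m : ℕ) : w (3*m+1) % 27 = 9 ∧ w (3*m+2) % 27 = 18 ∧ w (3*m+3) % 27 = 3 := by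
  induction m with
  | zero => refine ⟨?_, ?_, ?_⟩ <;> decide
  | succ k ih =>
    have s1 : w (3*k+4) = w (3*k+1) + 27 * (18 + 28 * (3*k) + 28 * ((3*k).choose 2)
        + 14 * ((3*k).choose 3)) := wstep (3*k)
    have s2 : w (3*k+5) = w (3*k+2) + 27 * (18 + 28 * (3*k+1) + 28 * ((3*k+1).choose 2)
        + 14 * ((3*k+1).choose 3)) := wstep (3*k+1)
    have s3 : w (3*k+6) = w (3*k+3) + 27 * (18 + 28 * (3*k+2) + 28 * ((3*k+2).choose 2)
        + 14 * ((3*k+2).choose 3)) := wstep (3*k+2)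
    have e1 : 3*(k+1)+1 = 3*k+4 := by ring
    have e2 : 3*(k+1)+2 = 3*k+5 := by ring
    have e3 : 3*(k+1)+3 = 3*k+6 := by ring
    rw [e1, e2, e3, s1, s2, s3]
    refine ⟨?_, ?_, ?_⟩ <;> omega

lemma w27 (m : ℕ) (hm : 0 < m) :
    w m % 27 = if m % 3 = 0 then 3 else if m % 3 = 1 then 9 else 18 := by
  rcases (by omega : m % 3 = 0 ∨ m % 3 = 1 ∨ m % 3 = 2) with h | h | h
  · have hq : 0 < m / 3 := by omega
    have := (wmod (m/3 - 1)).2.2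
    rw [show 3*(m/3-1)+3 = m from by omega] at this
    simp [h, this]
  · have := (wmod (m/3)).1
    rw [show 3*(m/3)+1 = m from by omega] at this
    simp [h, this]
  · have := (wmod (m/3)).2.1
    rw [show 3*(m/3)+2 = m from by omega] at this
    simp [h, this]

lemma w_dvd3 {m : ℕ} (hm : 0 < m) : 3 ∣ w m := by
  have := w27 m hm; split_ifs at this <;> omega

lemma w_dvd9 {m : ℕ} (hm : 0 < m) (h3 : m % 3 ≠ 0) : 9 ∣ w m := by
  have := w27 m hm; split_ifs at this <;> omega

lemma wz1 {m : ℕ} (hm : 0 < m) (h : m % 3 = 1) : (w m : ZMod 27) = 9 := by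
  have h2 := w27 m hm
  rw [if_neg (by omega), if_pos h] at h2
  obtain ⟨k, hk⟩ : ∃ k, w m = 27*k + 9 := ⟨w m / 27, by omega⟩
  rw [hk]; push_cast
  rw [show ((27:ZMod 27)) = 0 from by decide]
  ring

lemma wz2 {m : ℕ} (hm : 0 < m) (h : m % 3 = 2) : (w m : ZMod 27) = 18 := by
  have h2 := w27 m hm
  rw [if_neg (by omega), if_neg (by omega)] at h2
  obtain ⟨k, hk⟩ : ∃ k, w m = 27*k + 18 := ⟨w m / 27, by omega⟩
  rw [hk]; push_cast
  rw [show ((27:ZMod 27)) = 0 from by decide]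
  ring

lemma mod3_split {a b n : ℕ} (h : a * b = 3*n+2) :
    (a % 3 = 1 ∧ b % 3 = 2) ∨ (a % 3 = 2 ∧ b % 3 = 1) := by
  have hm : (a % 3) * (b % 3) % 3 = 2 := by
    rw [← Nat.mul_mod]; omega
  have ha : a % 3 < 3 := Nat.mod_lt _ (by norm_num)
  have hb : b % 3 < 3 := Nat.mod_lt _ (by norm_num)
  interval_cases h1 : a % 3 <;> interval_cases h2 : b % 3 <;> simp_all

lemma single {N : ℕ} (P : N.Partition) (h : P.parts.toFinset.card = 1) :
    ∃ a, 0 < a ∧ 0 < Multiset.card P.parts ∧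
      P.parts = Multiset.replicate (Multiset.card P.parts) a ∧
      (Multiset.card P.parts) * a = N ∧ P.parts.count a = Multiset.card P.parts := by
  obtain ⟨a, ha⟩ := Finset.card_eq_one.mp h
  have hmem : a ∈ P.parts := by
    rw [← Multiset.mem_toFinset, ha]; exact Finset.mem_singleton_self a
  have hrep : P.parts = Multiset.replicate (Multiset.card P.parts) a := by
    apply Multiset.eq_replicate_card.mpr
    intro b hb
    have : b ∈ P.parts.toFinset := Multiset.mem_toFinset.mpr hb
    rw [ha] at this; exact Finset.mem_singleton.mp this
  refine ⟨a, P.parts_pos hmem,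
    Multiset.card_pos.mpr (by intro h0; rw [h0] at hmem; simp at hmem), hrep, ?_, ?_⟩
  · have := P.parts_sum
    rw [hrep] at this ⊢
    simpa [Multiset.sum_replicate, Multiset.card_replicate] using this
  · conv_lhs => rw [hrep]
    simp [Multiset.count_replicate_self]

end C95Aux

open C95Aux in
theorem c95_congruence (n : ℕ) : ckj 9 5 (3 * n + 2) ≡ 0 [MOD 27] := by
  classical
  rw [Nat.modEq_zero_iff_dvd, ← ZMod.natCast_eq_zero_iff]
  have hck : ckj 9 5 (3*n+2) = ∑ P : (3*n+2).Partition,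
      ∏ s ∈ P.parts.toFinset, w (P.parts.count s) := rfl
  rw [hck, Nat.cast_sum]
  -- restrict to partitions with exactly one part size
  have hzero : ∀ P ∈ (Finset.univ : Finset (3*n+2).Partition),
      ((∏ s ∈ P.parts.toFinset, w (P.parts.count s) : ℕ) : ZMod 27) ≠ 0 →
      P.parts.toFinset.card = 1 := by
    intro P _ hne
    by_contra hcard
    apply hne
    rw [ZMod.natCast_eq_zero_iff]
    rcases Nat.lt_or_ge P.parts.toFinset.card 1 with hc | hc
    · exfalso
      have h0 : P.parts = 0 := Multiset.toFinset_eq_empty.mp (Finset.card_eq_zero.mp (by omega))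
      have := P.parts_sum; rw [h0] at this; simp at this
    · have hc2 : 2 ≤ P.parts.toFinset.card := by omega
      have hcountpos : ∀ s ∈ P.parts.toFinset, 0 < P.parts.count s := fun s hs =>
        Multiset.count_pos.mpr (Multiset.mem_toFinset.mp hs)
      have hex : ∃ s ∈ P.parts.toFinset, P.parts.count s % 3 ≠ 0 := by
        by_contra hall
        push_neg at hall
        have hsum : ∑ s ∈ P.parts.toFinset, P.parts.count s • s = 3*n+2 := by
          rw [← Finset.sum_multiset_count P.parts]; exact P.parts_sum
        have hdvd : (3:ℕ) ∣ 3*n+2 := by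
          rw [← hsum]
          exact Finset.dvd_sum fun s hs => by
            have h3 := hall s hs
            have : P.parts.count s • s = P.parts.count s * s := rfl
            rw [this]
            exact Dvd.dvd.mul_right (by omega) s
        omega
      obtain ⟨s0, hs0, hs0m⟩ := hex
      have h9 : 9 ∣ w (P.parts.count s0) := w_dvd9 (hcountpos s0 hs0) hs0m
      have hne' : (P.parts.toFinset.erase s0).Nonempty := by
        rw [← Finset.card_pos, Finset.card_erase_of_mem hs0]; omega
      obtain ⟨s1, hs1⟩ := hne'
      have h3 : 3 ∣ ∏ s ∈ P.parts.toFinset.erase s0, w (P.parts.count s) :=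
        dvd_trans (w_dvd3 (hcountpos s1 (Finset.mem_of_mem_erase hs1)))
          (Finset.dvd_prod_of_mem _ hs1)
      rw [← Finset.mul_prod_erase _ _ hs0]
      exact (show (27:ℕ) = 9*3 from rfl) ▸ mul_dvd_mul h9 h3
  rw [← Finset.sum_filter_of_ne hzero]
  -- reindex by divisor pairs
  set D : Finset (ℕ × ℕ) := (Finset.Icc 1 (3*n+2) ×ˢ Finset.Icc 1 (3*n+2)).filter
    (fun p => p.1 * p.2 = 3*n+2) with hD
  have step : ∑ P ∈ Finset.univ.filter
      (fun P : (3*n+2).Partition => P.parts.toFinset.card = 1),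
      ((∏ s ∈ P.parts.toFinset, w (P.parts.count s) : ℕ) : ZMod 27)
      = ∑ p ∈ D, ((w p.2 : ℕ) : ZMod 27) := by
    refine Finset.sum_bij'
      (i := fun P _ => ((3*n+2) / (Multiset.card P.parts), Multiset.card P.parts))
      (j := fun p hp => ⟨Multiset.replicate p.2 p.1,
        fun {i} hi => by
          have hie := Multiset.eq_of_mem_replicate hi
          subst hie
          have h1 := Finset.mem_filter.mp hp
          have h2 := (Finset.mem_product.mp h1.1).1
          have h3 := Finset.mem_Icc.mp h2
          omega,
        by
          have hp' := Finset.mem_filter.mp hp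
          rw [Multiset.sum_replicate, smul_eq_mul, Nat.mul_comm]
          exact hp'.2⟩)
      ?_ ?_ ?_ ?_ ?_
    · -- hi : i maps into D
      intro P hP
      have hP1 := (Finset.mem_filter.mp hP).2
      obtain ⟨a, hapos, hmpos, hrep, hprod, hcount⟩ := single P hP1
      have hdiv : (3*n+2) / Multiset.card P.parts = a :=
        Nat.div_eq_of_eq_mul_left hmpos (by rw [Nat.mul_comm a (Multiset.card P.parts)]; exact hprod.symm)
      rw [hdiv]
      rw [hD]
      refine Finset.mem_filter.mpr ⟨Finset.mem_product.mpr ⟨?_, ?_⟩, ?_⟩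
      · exact Finset.mem_Icc.mpr ⟨hapos, by nlinarith [hprod]⟩
      · exact Finset.mem_Icc.mpr ⟨hmpos, by nlinarith [hprod]⟩
      · dsimp only; rw [Nat.mul_comm]; exact hprod
    · -- hj : j maps into the filtered set
      intro p hp
      have hp' := Finset.mem_filter.mp hp
      have h2 : 1 ≤ p.2 := (Finset.mem_Icc.mp (Finset.mem_product.mp hp'.1).2).1
      refine Finset.mem_filter.mpr ⟨Finset.mem_univ _, ?_⟩
      dsimp only
      rw [Multiset.toFinset_replicate, if_neg (by omega)]
      simp
    · -- left_inv
      intro P hP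
      have hP1 := (Finset.mem_filter.mp hP).2
      obtain ⟨a, hapos, hmpos, hrep, hprod, hcount⟩ := single P hP1
      have hdiv : (3*n+2) / Multiset.card P.parts = a :=
        Nat.div_eq_of_eq_mul_left hmpos (by rw [Nat.mul_comm a (Multiset.card P.parts)]; exact hprod.symm)
      apply Nat.Partition.ext
      dsimp only
      rw [hdiv]
      exact hrep.symm
    · -- right_inv
      intro p hp
      have hp' := Finset.mem_filter.mp hp
      have h2 : 1 ≤ p.2 := (Finset.mem_Icc.mp (Finset.mem_product.mp hp'.1).2).1
      have hcard : Multiset.card (Multiset.replicate p.2 p.1) = p.2 :=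
        Multiset.card_replicate _ _
      dsimp only
      rw [hcard, ← hp'.2, Nat.mul_div_cancel _ (by omega)]
    · -- values agree
      intro P hP
      have hP1 := (Finset.mem_filter.mp hP).2
      obtain ⟨a, hapos, hmpos, hrep, hprod, hcount⟩ := single P hP1
      obtain ⟨b, hb⟩ := Finset.card_eq_one.mp hP1
      have hab : b = a := by
        have hbt : b ∈ P.parts.toFinset := hb ▸ Finset.mem_singleton_self b
        have hbm := Multiset.mem_toFinset.mp hbt
        conv at hbm => rw [hrep]
        exact Multiset.eq_of_mem_replicate hbm
      rw [hb, Finset.prod_singleton, hab, hcount]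
  rw [step]
  -- now the sum over divisor pairs vanishes by the involution (a,b) ↦ (b,a)
  apply Finset.sum_involution (g := fun p _ => (p.2, p.1))
  · -- f a + f (g a) = 0
    intro p hp
    have hp' := Finset.mem_filter.mp hp
    have h1 : 1 ≤ p.1 := (Finset.mem_Icc.mp (Finset.mem_product.mp hp'.1).1).1
    have h2 : 1 ≤ p.2 := (Finset.mem_Icc.mp (Finset.mem_product.mp hp'.1).2).1
    rcases mod3_split hp'.2 with ⟨ha, hb⟩ | ⟨ha, hb⟩
    · rw [wz2 (by omega) hb, wz1 (by omega) ha]; decide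
    · rw [wz1 (by omega) hb, wz2 (by omega) ha]; decide
  · -- g a ≠ a when f a ≠ 0
    intro p hp _
    have hp' := Finset.mem_filter.mp hp
    rcases mod3_split hp'.2 with ⟨ha, hb⟩ | ⟨ha, hb⟩ <;>
      exact fun hcontra => by
        have : p.2 = p.1 := congrArg Prod.fst hcontra
        omega
  · -- g maps into D
    intro p hp
    have hp' := Finset.mem_filter.mp hp
    refine Finset.mem_filter.mpr ⟨?_, ?_⟩
    · have := Finset.mem_product.mp hp'.1
      exact Finset.mem_product.mpr ⟨this.2, this.1⟩
    · dsimp only; rw [Nat.mul_comm]; exact hp'.2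
  · -- involution
    intro p hp
    rfl
end

section
/- For all integers n ≥ 0, c_{9,8}(3n+2) ≡ 0 (mod 27). -/
/-- The weight attached to a part size of multiplicity `m`. -/
def xw (m : ℕ) : ℕ :=
  ∑ i ∈ Finset.Icc 1 8, Nat.choose 9 i * Nat.choose (m - 1) (i - 1)

lemma xw_poly (m : ℕ) (hm : 1 ≤ m) :
    560 * xw m = m ^ 7 + 126 * m ^ 5 + 1869 * m ^ 3 + 3044 * m := by
  rcases le_or_gt m 7 with h | h
  · interval_cases m <;> decide
  · obtain ⟨j, rfl⟩ : ∃ j, m = j + 8 := ⟨m - 8, by omega⟩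
    have expand : xw (j+8) = 9 + 36 * (j+7).choose 1
        + 84 * (j+7).choose 2 + 126 * (j+7).choose 3 + 126 * (j+7).choose 4
        + 84 * (j+7).choose 5 + 36 * (j+7).choose 6 + 9 * (j+7).choose 7 := by
      rw [xw, ← Finset.Ico_add_one_right_eq_Icc, Finset.sum_Ico_eq_sum_range]
      norm_num [Finset.sum_range_succ, show Nat.choose 9 2 = 36 from rfl,
        show Nat.choose 9 3 = 84 from rfl, show Nat.choose 9 4 = 126 from rfl,
        show Nat.choose 9 5 = 126 from rfl, show Nat.choose 9 6 = 84 from rfl,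
        show Nat.choose 9 7 = 36 from rfl, show Nat.choose 9 8 = 9 from rfl]
    have h0 : j+7-0 = j+7 := by omega
    have h1 : j+7-1 = j+6 := by omega
    have h2 : j+7-2 = j+5 := by omega
    have h3 : j+7-3 = j+4 := by omega
    have h4 : j+7-4 = j+3 := by omega
    have h5 : j+7-5 = j+2 := by omega
    have h6 : j+7-6 = j+1 := by omega
    have hd : ∀ k : ℕ, Nat.factorial k * (j+7).choose k = Nat.descFactorial (j+7) k :=
      fun k => (Nat.descFactorial_eq_factorial_mul_choose _ _).symm
    have e1 : Nat.factorial 1 * (j+7).choose 1 = (j+7) := by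
      rw [hd]; simp only [Nat.descFactorial_succ, Nat.descFactorial_zero, h0]; ring
    have e2 : Nat.factorial 2 * (j+7).choose 2 = (j+6)*(j+7) := by
      rw [hd]; simp only [Nat.descFactorial_succ, Nat.descFactorial_zero, h0, h1]; ring
    have e3 : Nat.factorial 3 * (j+7).choose 3 = (j+5)*(j+6)*(j+7) := by
      rw [hd]; simp only [Nat.descFactorial_succ, Nat.descFactorial_zero, h0, h1, h2]; ring
    have e4 : Nat.factorial 4 * (j+7).choose 4 = (j+4)*(j+5)*(j+6)*(j+7) := by
      rw [hd]; simp only [Nat.descFactorial_succ, Nat.descFactorial_zero, h0, h1, h2, h3]; ring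
    have e5 : Nat.factorial 5 * (j+7).choose 5 = (j+3)*(j+4)*(j+5)*(j+6)*(j+7) := by
      rw [hd]; simp only [Nat.descFactorial_succ, Nat.descFactorial_zero, h0, h1, h2, h3, h4]; ring
    have e6 : Nat.factorial 6 * (j+7).choose 6 = (j+2)*(j+3)*(j+4)*(j+5)*(j+6)*(j+7) := by
      rw [hd]; simp only [Nat.descFactorial_succ, Nat.descFactorial_zero, h0, h1, h2, h3, h4, h5]
      ring
    have e7 : Nat.factorial 7 * (j+7).choose 7 = (j+1)*(j+2)*(j+3)*(j+4)*(j+5)*(j+6)*(j+7) := by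
      rw [hd]
      simp only [Nat.descFactorial_succ, Nat.descFactorial_zero, h0, h1, h2, h3, h4, h5, h6]
      ring
    have key : (560 * xw (j+8) : ℤ) = ((j:ℤ)+8) ^ 7 + 126 * ((j:ℤ)+8) ^ 5
        + 1869 * ((j:ℤ)+8) ^ 3 + 3044 * ((j:ℤ)+8) := by
      have E1 := congrArg (Nat.cast : ℕ → ℤ) e1
      have E2 := congrArg (Nat.cast : ℕ → ℤ) e2
      have E3 := congrArg (Nat.cast : ℕ → ℤ) e3
      have E4 := congrArg (Nat.cast : ℕ → ℤ) e4
      have E5 := congrArg (Nat.cast : ℕ → ℤ) e5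
      have E6 := congrArg (Nat.cast : ℕ → ℤ) e6
      have E7 := congrArg (Nat.cast : ℕ → ℤ) e7
      push_cast [expand, Nat.factorial] at E1 E2 E3 E4 E5 E6 E7 ⊢
      linear_combination 20160*E1 + 23520*E2 + 11760*E3 + 2940*E4 + 392*E5 + 28*E6 + E7
    zify
    push_cast at key ⊢
    linarith [key]

lemma xw_dvd3 (m : ℕ) (hm : 1 ≤ m) : 3 ∣ xw m := by
  have h := congrArg (Nat.cast : ℕ → ZMod 3) (xw_poly m hm)
  push_cast at h
  rw [← ZMod.natCast_eq_zero_iff]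
  exact (by decide : ∀ a x : ZMod 3, 560*x = a^7+126*a^5+1869*a^3+3044*a → x = 0) _ _ h

lemma xw_dvd9 (m : ℕ) (hm : 1 ≤ m) (h3 : ¬ 3 ∣ m) : 9 ∣ xw m := by
  have h := congrArg (Nat.cast : ℕ → ZMod 9) (xw_poly m hm)
  push_cast at h
  rw [← ZMod.natCast_eq_zero_iff]
  refine (by decide : ∀ a x : ZMod 9, ¬ 3 ∣ a.val →
    560*x = a^7+126*a^5+1869*a^3+3044*a → x = 0) _ _ ?_ h
  rw [ZMod.val_natCast]
  omega

lemma xw_mod27 (m : ℕ) (hm : 1 ≤ m) (h3 : ¬ 3 ∣ m) :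
    ((xw m : ℕ) : ZMod 27) = 9 * (m : ZMod 27) := by
  have h := congrArg (Nat.cast : ℕ → ZMod 27) (xw_poly m hm)
  push_cast at h
  refine (by decide : ∀ a x : ZMod 27, ¬ 3 ∣ a.val →
    560*x = a^7+126*a^5+1869*a^3+3044*a → x = 9*a) _ _ ?_ h
  rw [ZMod.val_natCast]
  omega


lemma Multiset.toFinset_replicate' {a : ℕ} {d : ℕ} (hd : d ≠ 0) :
    (Multiset.replicate d a).toFinset = {a} := by
  ext x
  simp [Multiset.mem_replicate, hd]

/-- The partition of `N` consisting of `d` copies of `N / d`, for a divisor `d` of `N`. -/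
def divPartition (N d : ℕ) (hd : d ∈ N.divisors) : N.Partition where
  parts := Multiset.replicate d (N / d)
  parts_pos := by
    intro i hi
    rw [Multiset.eq_of_mem_replicate hi]
    obtain ⟨hdvd, hN0⟩ := Nat.mem_divisors.mp hd
    have hdpos : 0 < d := Nat.pos_of_mem_divisors hd
    exact Nat.div_pos (Nat.le_of_dvd (Nat.pos_of_ne_zero hN0) hdvd) hdpos
  parts_sum := by
    rw [Multiset.sum_replicate, smul_eq_mul]
    exact Nat.mul_div_cancel' (Nat.mem_divisors.mp hd).1

lemma main_aux (N : ℕ) (hN3 : N % 3 = 2) :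
    ∑ P : N.Partition, ∏ s ∈ P.parts.toFinset,
      ((xw (P.parts.count s) : ℕ) : ZMod 27) = 0 := by
  have hN0 : N ≠ 0 := by omega
  have hNc3 : ((N : ℕ) : ZMod 3) = 2 := by
    have : N = 3 * (N / 3) + 2 := by omega
    rw [this]
    push_cast
    rw [show ((3:ZMod 3)) = 0 from rfl]
    ring
  rw [← Finset.sum_filter_add_sum_filter_not Finset.univ
    (fun P : N.Partition => P.parts.toFinset.card = 1)]
  have hcount_pos : ∀ (P : N.Partition) s, s ∈ P.parts.toFinset → 1 ≤ P.parts.count s :=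
    fun P s hs => Multiset.count_pos.mpr (Multiset.mem_toFinset.mp hs)
  have hsum_eq : ∀ P : N.Partition, ∑ s ∈ P.parts.toFinset, P.parts.count s * s = N := by
    intro P
    have h := Finset.sum_multiset_count P.parts
    rw [P.parts_sum] at h
    simp only [smul_eq_mul] at h
    exact h.symm
  have hexists : ∀ P : N.Partition, ∃ s ∈ P.parts.toFinset, ¬ 3 ∣ P.parts.count s := by
    intro P
    by_contra hc
    push_neg at hc
    have h3N : (3:ℕ) ∣ N := by
      rw [← hsum_eq P]
      exact Finset.dvd_sum fun s hs => (hc s hs).mul_right s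
    omega
  have hsingle : ∀ P : N.Partition, P.parts.toFinset.card = 1 →
      ∃ c s, 0 < c ∧ P.parts = Multiset.replicate c s ∧ c * s = N ∧
        Multiset.card P.parts = c := by
    intro P h1
    obtain ⟨s, hs⟩ := Finset.card_eq_one.mp h1
    have hmem : ∀ b ∈ P.parts, b = s := by
      intro b hb
      have hb' : b ∈ P.parts.toFinset := Multiset.mem_toFinset.mpr hb
      rw [hs] at hb'
      simpa using hb'
    have hrep : P.parts = Multiset.replicate (Multiset.card P.parts) s :=
      Multiset.eq_replicate_of_mem hmem
    refine ⟨Multiset.card P.parts, s, ?_, hrep, ?_, rfl⟩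
    · have hps := P.parts_sum
      rcases Nat.eq_zero_or_pos (Multiset.card P.parts) with h | h
      · rw [hrep, h] at hps
        simp at hps
        omega
      · exact h
    · have hps := P.parts_sum
      conv_lhs at hps => rw [hrep]
      rw [Multiset.sum_replicate, smul_eq_mul] at hps
      exact hps
  have hbig : ∑ P ∈ Finset.univ.filter
      (fun P : N.Partition => ¬ P.parts.toFinset.card = 1),
      ∏ s ∈ P.parts.toFinset, ((xw (P.parts.count s) : ℕ) : ZMod 27) = 0 := by
    apply Finset.sum_eq_zero
    intro P hP
    have hcard : P.parts.toFinset.card ≠ 1 := (Finset.mem_filter.mp hP).2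
    obtain ⟨s0, hs0m, hs0⟩ := hexists P
    have hcard2 : 2 ≤ P.parts.toFinset.card := by
      have := Finset.card_pos.mpr ⟨s0, hs0m⟩
      omega
    have herase : (P.parts.toFinset.erase s0).Nonempty := by
      rw [← Finset.card_pos, Finset.card_erase_of_mem hs0m]
      omega
    obtain ⟨s1, hs1⟩ := herase
    have hs1m : s1 ∈ P.parts.toFinset := Finset.mem_of_mem_erase hs1
    have hd : (27:ℕ) ∣ ∏ s ∈ P.parts.toFinset, xw (P.parts.count s) := by
      obtain ⟨a, ha⟩ := xw_dvd9 _ (hcount_pos P s0 hs0m) hs0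
      obtain ⟨b, hb⟩ := xw_dvd3 _ (hcount_pos P s1 hs1m)
      rw [← Finset.mul_prod_erase _ _ hs0m, ← Finset.mul_prod_erase _ _ hs1]
      exact ⟨a * b * ∏ s ∈ (P.parts.toFinset.erase s0).erase s1, xw (P.parts.count s),
        by rw [ha, hb]; ring⟩
    rw [← Nat.cast_prod]
    exact (ZMod.natCast_eq_zero_iff _ _).mpr hd
  have hsmall : ∑ P ∈ Finset.univ.filter
      (fun P : N.Partition => P.parts.toFinset.card = 1),
      ∏ s ∈ P.parts.toFinset, ((xw (P.parts.count s) : ℕ) : ZMod 27)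
      = ∑ d ∈ N.divisors, 9 * (d : ZMod 27) := by
    refine Finset.sum_bij'
      (i := fun P _ => Multiset.card P.parts)
      (j := fun d hd => divPartition N d hd)
      (hi := ?_) (hj := ?_) (left_neg := ?_) (right_neg := ?_) (h := ?_)
    · intro P hP
      obtain ⟨c, s, hc0, hrep, hcs, hcard⟩ := hsingle P (Finset.mem_filter.mp hP).2
      show Multiset.card P.parts ∈ N.divisors
      rw [hcard]
      exact Nat.mem_divisors.mpr ⟨⟨s, hcs.symm⟩, hN0⟩
    · intro d hd
      refine Finset.mem_filter.mpr ⟨Finset.mem_univ _, ?_⟩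
      have hdpos : d ≠ 0 := (Nat.pos_of_mem_divisors hd).ne'
      show (Multiset.replicate d (N / d)).toFinset.card = 1
      rw [Multiset.toFinset_replicate' hdpos, Finset.card_singleton]
    · intro P hP
      obtain ⟨c, s, hc0, hrep, hcs, hcard⟩ := hsingle P (Finset.mem_filter.mp hP).2
      apply Nat.Partition.ext
      show Multiset.replicate (Multiset.card P.parts) (N / Multiset.card P.parts) = P.parts
      rw [hcard, hrep, show N / c = s from by rw [← hcs, Nat.mul_div_cancel_left s hc0]]
    · intro d hd
      show Multiset.card (Multiset.replicate d (N / d)) = d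
      exact Multiset.card_replicate _ _
    · intro P hP
      obtain ⟨c, s, hc0, hrep, hcs, hcard⟩ := hsingle P (Finset.mem_filter.mp hP).2
      show (∏ s ∈ P.parts.toFinset, ((xw (P.parts.count s) : ℕ) : ZMod 27))
        = 9 * ((Multiset.card P.parts : ℕ) : ZMod 27)
      have hsm : P.parts.toFinset = {s} := by
        rw [hrep]
        exact Multiset.toFinset_replicate' hc0.ne'
      have hcnt : P.parts.count s = c := by
        conv_lhs => rw [hrep]
        exact Multiset.count_replicate_self _ _
      rw [hsm, Finset.prod_singleton, hcnt, hcard]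
      have h3c : ¬ 3 ∣ c := by
        intro h3c
        have : (3:ℕ) ∣ N := h3c.trans ⟨s, hcs.symm⟩
        omega
      exact xw_mod27 _ hc0 h3c
  have hsigma : (3:ℕ) ∣ ∑ d ∈ N.divisors, d := by
    apply (ZMod.natCast_eq_zero_iff _ 3).mp
    push_cast
    refine Finset.sum_involution (fun d _ => N / d) ?_ ?_ ?_ ?_
    · intro d hd
      have hdvd := (Nat.mem_divisors.mp hd).1
      have hprod : d * (N / d) = N := Nat.mul_div_cancel' hdvd
      have hcast : (d : ZMod 3) * ((N / d : ℕ) : ZMod 3) = 2 := by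
        have h := congrArg (Nat.cast : ℕ → ZMod 3) hprod
        push_cast at h
        rw [h, hNc3]
      exact (by decide : ∀ a b : ZMod 3, a * b = 2 → a + b = 0) _ _ hcast
    · intro d hd _ heq
      have heq' : N / d = d := heq
      have hdvd := (Nat.mem_divisors.mp hd).1
      have hprod : d * (N / d) = N := Nat.mul_div_cancel' hdvd
      rw [heq'] at hprod
      have hcast : (d : ZMod 3) * (d : ZMod 3) = 2 := by
        have h := congrArg (Nat.cast : ℕ → ZMod 3) hprod
        push_cast at h
        rw [h, hNc3]
      exact (by decide : ∀ a : ZMod 3, ¬ a * a = 2) _ hcast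
    · intro d hd
      exact Nat.mem_divisors.mpr ⟨Nat.div_dvd_of_dvd (Nat.mem_divisors.mp hd).1, hN0⟩
    · intro d hd
      exact Nat.div_div_self (Nat.mem_divisors.mp hd).1 hN0
  have hfinal : ∑ d ∈ N.divisors, 9 * (d : ZMod 27) = 0 := by
    obtain ⟨t, ht⟩ := hsigma
    rw [← Finset.mul_sum, ← Nat.cast_sum, ht]
    push_cast
    rw [← mul_assoc]
    norm_num
    rw [show ((27:ZMod 27)) = 0 from by decide, zero_mul]
  rw [hsmall, hbig, hfinal, add_zero]

theorem c98_congruence (n : ℕ) : ckj 9 8 (3 * n + 2) ≡ 0 [MOD 27] := by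
  rw [Nat.modEq_zero_iff_dvd, ← ZMod.natCast_eq_zero_iff]
  have hckj : ckj 9 8 (3 * n + 2) = ∑ P : (3 * n + 2).Partition,
      ∏ s ∈ P.parts.toFinset, xw (P.parts.count s) := rfl
  rw [hckj]
  push_cast
  exact main_aux (3 * n + 2) (by omega)

-- #print axioms check
end

section
/- For all integers n ≥ 0, c_{9,3}(9n+2) ≡ 0 (mod 27). -/
def fc (m : ℕ) : ℕ := ∑ i ∈ Finset.Icc 1 3, Nat.choose 9 i * Nat.choose (m-1) (i-1)

lemma fc_eq (m : ℕ) : fc m = 9 + 36*(m-1) + 84 * Nat.choose (m-1) 2 := by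
  have : Finset.Icc 1 3 = {1,2,3} := rfl
  simp [fc, this, Finset.sum_insert, Nat.choose]
  ring

lemma pair_zero : ∀ a < 9, ∀ b < 9, (a*b) % 9 = 2 → (fc a + fc b) % 27 = 0 := by decide

lemma three_dvd_fc (m : ℕ) : 3 ∣ fc m := by
  rw [fc_eq]
  exact dvd_add (dvd_add (by norm_num) (dvd_mul_of_dvd_left (by norm_num) _))
    (dvd_mul_of_dvd_left (by norm_num) _)

lemma two_dvd_mul_pred (t : ℕ) : 2 ∣ t * (t - 1) := by
  cases t with
  | zero => simp
  | succ u =>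
    simpa [Nat.succ_sub_one, mul_comm] using (Nat.even_mul_succ_self u).two_dvd

lemma nine_dvd_fc (m : ℕ) (h : ¬ 3 ∣ m) : 9 ∣ fc m := by
  rw [fc_eq]
  set t := m - 1 with ht
  have h3 : 3 ∣ t * (t - 1) := by
    have h01 : t % 3 = 0 ∨ t % 3 = 1 := by omega
    rcases h01 with h0 | h1
    · exact (Nat.dvd_of_mod_eq_zero h0).mul_right _
    · exact Dvd.dvd.mul_left (Nat.dvd_of_mod_eq_zero (by omega : (t-1) % 3 = 0)) _
  have hch : Nat.choose t 2 * 2 = t * (t - 1) := by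
    rw [Nat.choose_two_right]
    exact Nat.div_mul_cancel (two_dvd_mul_pred t)
  have hc : 3 ∣ Nat.choose t 2 := by
    have : 3 ∣ Nat.choose t 2 * 2 := hch ▸ h3
    exact (Nat.Coprime.dvd_of_dvd_mul_right (by norm_num) this)
  obtain ⟨c, hc⟩ := hc
  rw [hc]
  exact dvd_add (dvd_add (by norm_num) (dvd_mul_of_dvd_left (by norm_num) _)) ⟨28*c, by ring⟩

lemma choose_step (t : ℕ) : Nat.choose (t+9) 2 = Nat.choose t 2 + 9*t + 36 := by
  induction t with
  | zero => rfl
  | succ u ih =>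
    have h1 : Nat.choose (u+1+9) 2 = (u+9) + Nat.choose (u+9) 2 := by
      rw [show u+1+9 = (u+9)+1 from rfl, Nat.choose_succ_succ, Nat.choose_one_right]
    have h2 : Nat.choose (u+1) 2 = u + Nat.choose u 2 := by
      rw [Nat.choose_succ_succ, Nat.choose_one_right]
    omega

lemma fc_period (m : ℕ) (hm : 1 ≤ m) : fc (m+9) = fc m + 27 * (124 + 28*(m-1)) := by
  rw [fc_eq, fc_eq, show m+9-1 = (m-1)+9 by omega, choose_step]
  ring

lemma fc_mod (d : ℕ) (hd : d % 9 ≠ 0) : fc d % 27 = fc (d % 9) % 27 := by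
  induction d using Nat.strong_induction_on with
  | _ d ih =>
    by_cases h9 : d < 9
    · rw [Nat.mod_eq_of_lt h9]
    · have h1 : 1 ≤ d - 9 := by omega
      have := fc_period (d - 9) h1
      rw [show d = (d - 9) + 9 by omega, this, Nat.add_mul_mod_self_left,
        Nat.add_mod_right]
      exact ih (d - 9) (by omega) (by omega)

lemma pair_dvd (N d : ℕ) (hN9 : N % 9 = 2) (hd : d ∈ N.divisors) :
    27 ∣ fc d + fc (N / d) := by
  obtain ⟨hdvd, hN0⟩ := Nat.mem_divisors.mp hd
  have hd0 : 0 < d := Nat.pos_of_mem_divisors hd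
  have hde : d * (N / d) = N := Nat.mul_div_cancel' hdvd
  have h3N : N % 3 = 2 := by omega
  have h3d : ¬ 3 ∣ d := fun h => by
    have : 3 ∣ N := h.trans hdvd
    omega
  have h3e : ¬ 3 ∣ (N / d) := fun h => by
    have : 3 ∣ N := h.trans (Nat.div_dvd_of_dvd hdvd)
    omega
  have ha : d % 9 ≠ 0 := fun h => h3d (by omega)
  have hb : (N / d) % 9 ≠ 0 := fun h => h3e (by omega)
  have hab : (d % 9) * ((N / d) % 9) % 9 = 2 := by
    rw [← Nat.mul_mod, hde, hN9]
  have hz := pair_zero (d % 9) (Nat.mod_lt _ (by norm_num)) ((N / d) % 9)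
    (Nat.mod_lt _ (by norm_num)) hab
  have : (fc d + fc (N / d)) % 27 = 0 := by
    rw [Nat.add_mod, fc_mod d ha, fc_mod (N / d) hb, ← Nat.add_mod, hz]
  exact Nat.dvd_of_mod_eq_zero this

lemma divsum (N : ℕ) (hN9 : N % 9 = 2) :
    (∑ d ∈ N.divisors, (fc d : ZMod 27)) = 0 := by
  have e1 : (∑ d ∈ N.divisors, (fc (N / d) : ZMod 27))
      = ∑ d ∈ N.divisors, (fc d : ZMod 27) :=
    Nat.sum_div_divisors N (fun d => (fc d : ZMod 27))
  have h2S : (∑ d ∈ N.divisors, (fc d : ZMod 27))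
      + ∑ d ∈ N.divisors, (fc d : ZMod 27) = 0 := by
    nth_rewrite 2 [← e1]
    rw [← Finset.sum_add_distrib]
    refine Finset.sum_eq_zero fun d hd => ?_
    have h := pair_dvd N d hN9 hd
    have : ((fc d + fc (N / d) : ℕ) : ZMod 27) = 0 :=
      (ZMod.natCast_eq_zero_iff _ _).mpr h
    push_cast at this
    exact this
  set S := ∑ d ∈ N.divisors, (fc d : ZMod 27) with hS
  have h1 : (28 : ZMod 27) = 1 := by decide
  calc S = 28 * S := by rw [h1, one_mul]
    _ = 14 * (S + S) := by ring
    _ = 0 := by rw [h2S, mul_zero]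

theorem c93_congruence (n : ℕ) : ckj 9 3 (9 * n + 2) ≡ 0 [MOD 27] := by
  set N := 9 * n + 2 with hNdef
  have hN9 : N % 9 = 2 := by omega
  have hN0 : N ≠ 0 := by omega
  rw [Nat.modEq_zero_iff_dvd, ← ZMod.natCast_eq_zero_iff]
  have hck : ckj 9 3 N = ∑ P : N.Partition, ∏ s ∈ P.parts.toFinset,
      fc (P.parts.count s) := rfl
  rw [hck]
  push_cast
  -- vanishing for partitions with ≠ 1 distinct part size
  have vanish : ∀ P : N.Partition, P.parts.toFinset.card ≠ 1 →
      (∏ s ∈ P.parts.toFinset, (fc (P.parts.count s) : ZMod 27)) = 0 := by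
    intro P hcard
    rcases Nat.lt_or_ge P.parts.toFinset.card 1 with h0 | h2
    · -- card = 0 impossible
      exfalso
      have : P.parts.toFinset = ∅ := Finset.card_eq_zero.mp (by omega)
      have hp0 : P.parts = 0 := Multiset.toFinset_eq_empty.mp this
      have := P.parts_sum
      rw [hp0] at this
      simp at this
    · have h2 : 2 ≤ P.parts.toFinset.card := by omega
      -- exists s0 with count not divisible by 3
      have hex : ∃ s0 ∈ P.parts.toFinset, ¬ 3 ∣ P.parts.count s0 := by
        by_contra hall
        push_neg at hall
        have hall' : ∀ a ∈ P.parts, 3 ∣ P.parts.count a := fun a ha =>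
          hall a (Multiset.mem_toFinset.mpr ha)
        obtain ⟨u, hu⟩ := Multiset.exists_smul_of_dvd_count P.parts hall'
        have : P.parts.sum = 3 * u.sum := by
          rw [hu, Multiset.sum_nsmul]; rfl
        have hs := P.parts_sum
        rw [this] at hs
        omega
      obtain ⟨s0, hs0T, hs0⟩ := hex
      have h9 : 9 ∣ fc (P.parts.count s0) := nine_dvd_fc _ hs0
      have herase : (P.parts.toFinset.erase s0).Nonempty := by
        rw [← Finset.card_pos, Finset.card_erase_of_mem hs0T]; omega
      obtain ⟨s1, hs1⟩ := herase
      have hdvd : (27 : ℕ) ∣ ∏ s ∈ P.parts.toFinset, fc (P.parts.count s) := by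
        rw [← Finset.mul_prod_erase _ _ hs0T,
            ← Finset.mul_prod_erase _ _ hs1]
        have : (27 : ℕ) = 9 * 3 := by norm_num
        rw [this]
        exact mul_dvd_mul h9 (dvd_mul_of_dvd_left (three_dvd_fc _) _)
      rw [← Nat.cast_prod]
      exact (ZMod.natCast_eq_zero_iff _ _).mpr hdvd
  rw [← Finset.sum_filter_of_ne
    (p := fun P : N.Partition => P.parts.toFinset.card = 1)
    (fun P _ hne => by by_contra h; exact hne (vanish P h))]
  -- bijection with divisors
  have hbij : ∑ P ∈ Finset.univ.filter
      (fun P : N.Partition => P.parts.toFinset.card = 1),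
      (∏ s ∈ P.parts.toFinset, (fc (P.parts.count s) : ZMod 27))
      = ∑ d ∈ N.divisors, (fc (N / d) : ZMod 27) := by
    symm
    refine Finset.sum_bij (fun d hd => ⟨Multiset.replicate (N / d) d, ?_, ?_⟩)
      ?_ ?_ ?_ ?_
    · intro i hi
      have := Multiset.eq_of_mem_replicate hi
      subst this
      exact Nat.pos_of_mem_divisors hd
    · rw [Multiset.sum_replicate, smul_eq_mul]
      exact Nat.div_mul_cancel (Nat.mem_divisors.mp hd).1
    · -- membership in filter
      intro d hd
      have hk : N / d ≠ 0 := by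
        have := Nat.div_mul_cancel (Nat.mem_divisors.mp hd).1
        intro h; rw [h] at this; omega
      simp only [Finset.mem_filter, Finset.mem_univ, true_and]
      show (Multiset.replicate (N / d) d).toFinset.card = 1
      rw [Multiset.toFinset_replicate, if_neg hk]
      rfl
    · -- injective
      intro d1 hd1 d2 hd2 heq
      have hparts : Multiset.replicate (N / d1) d1 = Multiset.replicate (N / d2) d2 := by
        exact congrArg Nat.Partition.parts heq
      have hk1 : N / d1 ≠ 0 := by
        have := Nat.div_mul_cancel (Nat.mem_divisors.mp hd1).1
        intro h; rw [h] at this; omega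
      have : d1 ∈ Multiset.replicate (N / d2) d2 := by
        rw [← hparts]
        exact Multiset.mem_replicate.mpr ⟨hk1, rfl⟩
      exact (Multiset.eq_of_mem_replicate this)
    · -- surjective
      intro P hP
      simp only [Finset.mem_filter, Finset.mem_univ, true_and] at hP
      obtain ⟨s, hs⟩ := Finset.card_eq_one.mp hP
      have hall : ∀ b ∈ P.parts, b = s := by
        intro b hb
        have : b ∈ P.parts.toFinset := Multiset.mem_toFinset.mpr hb
        rw [hs] at this
        exact Finset.mem_singleton.mp this
      have hrep : P.parts = Multiset.replicate (Multiset.card P.parts) s :=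
        Multiset.eq_replicate_card.mpr hall
      have hsum : Multiset.card P.parts * s = N := by
        have := P.parts_sum
        rw [hrep, Multiset.sum_replicate, smul_eq_mul] at this
        exact this
      have hspos : 0 < s := by
        have hsmem : s ∈ P.parts := by
          have : s ∈ P.parts.toFinset := by rw [hs]; exact Finset.mem_singleton_self s
          exact Multiset.mem_toFinset.mp this
        exact P.parts_pos hsmem
      have hsdvd : s ∈ N.divisors :=
        Nat.mem_divisors.mpr ⟨Dvd.intro_left _ hsum, hN0⟩
      refine ⟨s, hsdvd, ?_⟩
      have hdiv : N / s = Multiset.card P.parts :=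
        Nat.div_eq_of_eq_mul_left hspos hsum.symm
      apply Nat.Partition.ext
      show Multiset.replicate (N / s) s = P.parts
      rw [hdiv, ← hrep]
    · -- values agree
      intro d hd
      have hk : N / d ≠ 0 := by
        have := Nat.div_mul_cancel (Nat.mem_divisors.mp hd).1
        intro h; rw [h] at this; omega
      show (fc (N / d) : ZMod 27) = ∏ s ∈ (Multiset.replicate (N / d) d).toFinset,
        (fc ((Multiset.replicate (N / d) d).count s) : ZMod 27)
      rw [Multiset.toFinset_replicate, if_neg hk, Finset.prod_singleton,
        Multiset.count_replicate_self]
  rw [hbij, Nat.sum_div_divisors N (fun d => (fc d : ZMod 27))]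
  exact divsum N hN9
end

section
/- For all integers n ≥ 0, c_{9,6}(9n+2) ≡ 0 (mod 27). -/
/-- The color factor for a part size with multiplicity t+1. -/
def Fc (t : ℕ) : ℕ := ∑ i ∈ Finset.Icc 1 6, Nat.choose 9 i * Nat.choose t (i-1)

lemma Fc_expand (t : ℕ) : Fc t = 9 + 36*t.choose 1 + 84*t.choose 2 + 126*t.choose 3 + 126*t.choose 4 + 84*t.choose 5 := by
  show (∑ i ∈ Finset.Icc 1 6, Nat.choose 9 i * Nat.choose t (i-1)) = _
  rw [show (Finset.Icc 1 6 : Finset ℕ) = {1,2,3,4,5,6} from rfl]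
  simp [Finset.sum_insert, Finset.mem_insert,
    show Nat.choose 9 2 = 36 from rfl, show Nat.choose 9 3 = 84 from rfl,
    show Nat.choose 9 4 = 126 from rfl, show Nat.choose 9 5 = 126 from rfl,
    show Nat.choose 9 6 = 84 from rfl]
  ring

lemma vand (t k : ℕ) : (t+27).choose k = ∑ j ∈ Finset.range (k+1), t.choose j * Nat.choose 27 (k - j) := by
  rw [Nat.add_choose_eq, Finset.Nat.sum_antidiagonal_eq_sum_range_succ_mk]

lemma hv2 (t : ℕ) : (t+27).choose 2 = t.choose 2 + 27*t.choose 1 + 351 := by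
  rw [vand]
  simp [Finset.sum_range_succ, show Nat.choose 27 2 = 351 from rfl]
  ring

lemma hv3 (t : ℕ) : (t+27).choose 3 = t.choose 3 + 27*t.choose 2 + 351*t.choose 1 + 2925 := by
  rw [vand]
  simp [Finset.sum_range_succ, show Nat.choose 27 2 = 351 from rfl, show Nat.choose 27 3 = 2925 from rfl]
  ring

lemma hv4 (t : ℕ) : (t+27).choose 4 = t.choose 4 + 27*t.choose 3 + 351*t.choose 2 + 2925*t.choose 1 + 17550 := by
  rw [vand]
  simp [Finset.sum_range_succ, show Nat.choose 27 2 = 351 from rfl, show Nat.choose 27 3 = 2925 from rfl,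
    show Nat.choose 27 4 = 17550 from rfl]
  ring

lemma hv5 (t : ℕ) : (t+27).choose 5 = t.choose 5 + 27*t.choose 4 + 351*t.choose 3 + 2925*t.choose 2 + 17550*t.choose 1 + 80730 := by
  rw [vand]
  simp [Finset.sum_range_succ, show Nat.choose 27 2 = 351 from rfl, show Nat.choose 27 3 = 2925 from rfl,
    show Nat.choose 27 4 = 17550 from rfl, show Nat.choose 27 5 = 80730 from rfl]
  ring

lemma Fc_step (t : ℕ) : Fc (t + 27) ≡ Fc t [MOD 27] := by
  have h : Fc (t+27) = Fc t + 27 * (347838 + 69972*t.choose 1 + 10864*t.choose 2 + 1218*t.choose 3 + 84*t.choose 4) := by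
    rw [Fc_expand, Fc_expand, hv2, hv3, hv4, hv5, Nat.choose_one_right, Nat.choose_one_right]
    ring
  rw [h]
  simp [Nat.ModEq, Nat.add_mul_mod_self_left]

lemma Fc_mod (t : ℕ) : Fc t ≡ Fc (t % 27) [MOD 27] := by
  induction t using Nat.strong_induction_on with
  | _ t ih =>
    by_cases h : t < 27
    · rw [Nat.mod_eq_of_lt h]
    · have e : t - 27 + 27 = t := by omega
      calc Fc t = Fc (t - 27 + 27) := by rw [e]
        _ ≡ Fc (t - 27) [MOD 27] := Fc_step _
        _ ≡ Fc ((t - 27) % 27) [MOD 27] := ih _ (by omega)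
        _ = Fc (t % 27) := by congr 1; omega

lemma checkA : ∀ r ∈ Finset.range 27, Fc r % 3 = 0 := by decide +kernel
lemma checkB : ∀ r ∈ Finset.range 27, (r+1) % 3 ≠ 0 → Fc r % 9 = 0 := by decide +kernel
lemma checkC : ∀ a ∈ Finset.range 27, ∀ b ∈ Finset.range 27,
    ((a+1)*(b+1)) % 9 = 2 % 9 → (Fc a + Fc b) % 27 = 0 := by decide +kernel

lemma factA (t : ℕ) : 3 ∣ Fc t := by
  have h : Fc t % 3 = Fc (t % 27) % 3 := (Fc_mod t).of_dvd (by norm_num : (3:ℕ) ∣ 27)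
  have := checkA (t % 27) (Finset.mem_range.mpr (Nat.mod_lt _ (by norm_num)))
  omega

lemma factB (t : ℕ) (h3 : ¬ 3 ∣ (t+1)) : 9 ∣ Fc t := by
  have h : Fc t % 9 = Fc (t % 27) % 9 := (Fc_mod t).of_dvd (by norm_num : (9:ℕ) ∣ 27)
  have := checkB (t % 27) (Finset.mem_range.mpr (Nat.mod_lt _ (by norm_num))) (by omega)
  omega

lemma factC (t u : ℕ) (h : ((t+1)*(u+1)) % 9 = 2) : (Fc t + Fc u) % 27 = 0 := by
  have ht := Fc_mod t
  have hu := Fc_mod u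
  have hmul : ((t % 27 + 1)*(u % 27 + 1)) % 9 = 2 % 9 := by
    have h1 : (t % 27 + 1) % 9 = (t + 1) % 9 := by omega
    have h2 : (u % 27 + 1) % 9 = (u + 1) % 9 := by omega
    rw [Nat.mul_mod, h1, h2, ← Nat.mul_mod]
    omega
  have hc := checkC (t % 27) (Finset.mem_range.mpr (Nat.mod_lt _ (by norm_num)))
    (u % 27) (Finset.mem_range.mpr (Nat.mod_lt _ (by norm_num))) hmul
  have h' : (Fc t + Fc u) % 27 = (Fc (t % 27) + Fc (u % 27)) % 27 := Nat.ModEq.add ht hu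
  omega

/-- Key divisibility for partitions with at least two distinct part sizes. -/
lemma prod_dvd {N : ℕ} (hN : N % 3 = 2) (P : N.Partition)
    (hc : P.parts.toFinset.card ≠ 1) :
    27 ∣ ∏ s ∈ P.parts.toFinset, Fc (P.parts.count s - 1) := by
  have hsum : P.parts.sum = N := P.parts_sum
  -- card cannot be 0
  have hc0 : P.parts.toFinset.card ≠ 0 := by
    intro h0
    rw [Finset.card_eq_zero, Multiset.toFinset_eq_empty] at h0
    rw [h0] at hsum
    simp at hsum
    omega
  have hc2 : 2 ≤ P.parts.toFinset.card := by omega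
  -- there exists s0 with count not divisible by 3
  have hex : ∃ s0 ∈ P.parts.toFinset, ¬ 3 ∣ P.parts.count s0 := by
    by_contra hall
    push_neg at hall
    have h3 : (3:ℕ) ∣ N := by
      rw [← hsum]
      have := Finset.sum_multiset_map_count P.parts (id : ℕ → ℕ)
      rw [Multiset.map_id] at this
      rw [this]
      apply Finset.dvd_sum
      intro s hs
      exact Dvd.dvd.mul_right (hall s hs) _
    omega
  obtain ⟨s0, hs0, hns0⟩ := hex
  have hcount0 : 1 ≤ P.parts.count s0 := Multiset.one_le_count_iff_mem.mpr (Multiset.mem_toFinset.mp hs0)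
  rw [← Finset.mul_prod_erase _ _ hs0]
  have h9 : 9 ∣ Fc (P.parts.count s0 - 1) := by
    apply factB
    have : P.parts.count s0 - 1 + 1 = P.parts.count s0 := by omega
    rw [this]; exact hns0
  -- the erased set is nonempty
  have hne : (P.parts.toFinset.erase s0).Nonempty := by
    rw [← Finset.card_pos, Finset.card_erase_of_mem hs0]
    omega
  obtain ⟨s1, hs1⟩ := hne
  have h3 : 3 ∣ ∏ s ∈ P.parts.toFinset.erase s0, Fc (P.parts.count s - 1) :=
    dvd_trans (factA _) (Finset.dvd_prod_of_mem _ hs1)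
  exact mul_dvd_mul h9 h3

theorem c96_congruence (n : ℕ) : ckj 9 6 (9 * n + 2) ≡ 0 [MOD 27] := by
  set N := 9 * n + 2 with hNdef
  have hN3 : N % 3 = 2 := by omega
  have hN0 : N ≠ 0 := by omega
  rw [Nat.modEq_zero_iff_dvd]
  rw [← ZMod.natCast_eq_zero_iff _ 27]
  have hrw : ckj 9 6 N = ∑ P : N.Partition, ∏ s ∈ P.parts.toFinset, Fc (P.parts.count s - 1) := rfl
  rw [hrw]
  push_cast
  rw [← Finset.sum_filter_add_sum_filter_not Finset.univ (fun P : N.Partition => P.parts.toFinset.card = 1)]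
  have hsecond : ∑ P ∈ Finset.univ.filter (fun P : N.Partition => ¬ P.parts.toFinset.card = 1),
      ∏ s ∈ P.parts.toFinset, ((Fc (P.parts.count s - 1) : ZMod 27)) = 0 := by
    apply Finset.sum_eq_zero
    intro P hP
    rw [Finset.mem_filter] at hP
    have hdvd := prod_dvd hN3 P hP.2
    have hc : ((∏ s ∈ P.parts.toFinset, Fc (P.parts.count s - 1) : ℕ) : ZMod 27) = 0 :=
      (ZMod.natCast_eq_zero_iff _ 27).mpr hdvd
    rw [Nat.cast_prod] at hc
    exact hc
  rw [hsecond, add_zero]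
  -- first sum: biject with divisors
  have hfirst : ∑ P ∈ Finset.univ.filter (fun P : N.Partition => P.parts.toFinset.card = 1),
      ∏ s ∈ P.parts.toFinset, ((Fc (P.parts.count s - 1) : ZMod 27))
      = ∑ m ∈ N.divisors, ((Fc (m - 1) : ZMod 27)) := by
    apply Finset.sum_bij (fun P _ => (Multiset.card P.parts))
    · -- maps to divisors
      intro P hP
      rw [Finset.mem_filter] at hP
      obtain ⟨hcard, ⟨a, hrep⟩⟩ := (Multiset.toFinset_card_eq_one_iff _).mp hP.2
      rw [Nat.mem_divisors]
      refine ⟨⟨a, ?_⟩, hN0⟩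
      have := P.parts_sum
      rw [hrep, Multiset.nsmul_singleton, Multiset.sum_replicate, smul_eq_mul] at this
      omega
    · -- injective
      intro P1 h1 P2 h2 heq
      rw [Finset.mem_filter] at h1 h2
      obtain ⟨hc1, ⟨a1, hrep1⟩⟩ := (Multiset.toFinset_card_eq_one_iff _).mp h1.2
      obtain ⟨hc2, ⟨a2, hrep2⟩⟩ := (Multiset.toFinset_card_eq_one_iff _).mp h2.2
      have hs1 := P1.parts_sum
      have hs2 := P2.parts_sum
      rw [hrep1, Multiset.nsmul_singleton, Multiset.sum_replicate, smul_eq_mul] at hs1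
      rw [hrep2, Multiset.nsmul_singleton, Multiset.sum_replicate, smul_eq_mul] at hs2
      have ha : a1 = a2 := by
        rw [heq] at hs1
        exact Nat.eq_of_mul_eq_mul_left (Nat.pos_of_ne_zero hc2) (hs1.trans hs2.symm)
      apply Nat.Partition.ext
      rw [hrep1, hrep2, heq, ha]
    · -- surjective
      intro m hm
      rw [Nat.mem_divisors] at hm
      obtain ⟨⟨a, ha⟩, -⟩ := hm
      have hm0 : m ≠ 0 := by rintro rfl; simp at ha
      have ha0 : a ≠ 0 := by rintro rfl; simp at ha
      refine ⟨⟨Multiset.replicate m a, ?_, ?_⟩, ?_, ?_⟩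
      · intro x hx
        rw [Multiset.eq_of_mem_replicate hx]
        omega
      · rw [Multiset.sum_replicate, smul_eq_mul]; omega
      · rw [Finset.mem_filter]
        refine ⟨Finset.mem_univ _, ?_⟩
        show (Multiset.replicate m a).toFinset.card = 1
        rw [Multiset.toFinset_replicate, if_neg hm0, Finset.card_singleton]
      · show Multiset.card (Multiset.replicate m a) = m
        exact Multiset.card_replicate _ _
    · -- values agree
      intro P hP
      rw [Finset.mem_filter] at hP
      obtain ⟨hcard, ⟨a, hrep⟩⟩ := (Multiset.toFinset_card_eq_one_iff _).mp hP.2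
      rw [hrep, Multiset.nsmul_singleton, Multiset.toFinset_replicate, if_neg hcard,
        Finset.prod_singleton, Multiset.count_replicate, if_pos rfl,
        Multiset.card_replicate]
  rw [hfirst]
  -- divisor sum vanishes
  have hswap : ∑ m ∈ N.divisors, ((Fc (N / m - 1) : ZMod 27))
      = ∑ m ∈ N.divisors, ((Fc (m - 1) : ZMod 27)) :=
    Nat.sum_div_divisors N (fun d => ((Fc (d - 1) : ZMod 27)))
  have hT2 : (∑ m ∈ N.divisors, ((Fc (m - 1) : ZMod 27)))
      + ∑ m ∈ N.divisors, ((Fc (m - 1) : ZMod 27)) = 0 := by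
    nth_rewrite 1 [← hswap]
    rw [← Finset.sum_add_distrib]
    apply Finset.sum_eq_zero
    intro m hm
    rw [Nat.mem_divisors] at hm
    have hm0 : m ≠ 0 := by rintro rfl; exact hm.2 (Nat.eq_zero_of_zero_dvd hm.1)
    have hq0 : N / m ≠ 0 := by
      have h := Nat.div_mul_cancel hm.1
      intro h0
      rw [h0, zero_mul] at h
      omega
    have hmul : ((m - 1 + 1) * (N / m - 1 + 1)) % 9 = 2 := by
      have h1 : m - 1 + 1 = m := by omega
      have h2 : N / m - 1 + 1 = N / m := Nat.sub_add_cancel (Nat.one_le_iff_ne_zero.mpr hq0)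
      rw [h1, h2, Nat.mul_div_cancel' hm.1]
      omega
    have := factC (m - 1) (N / m - 1) hmul
    have hcast : ((Fc (m-1) + Fc (N/m - 1) : ℕ) : ZMod 27) = 0 :=
      (ZMod.natCast_eq_zero_iff _ 27).mpr (by omega)
    push_cast at hcast
    rw [add_comm]
    exact hcast
  have h28 : (28 : ZMod 27) = 1 := by decide
  set T := ∑ m ∈ N.divisors, ((Fc (m - 1) : ZMod 27)) with hT
  calc T = 28 * T := by rw [h28, one_mul]
    _ = 14 * (T + T) := by ring
    _ = 0 := by rw [hT2, mul_zero]
end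

section
/- Let p be a prime and n a positive integer not divisible by p. Then c_{2p,p}(n) ≡ 0 (mod p). -/
/-- The number of overpartitions of n. -/
def overp (n : ℕ) : ℕ := ∑ P : n.Partition, 2 ^ P.parts.toFinset.card

lemma pdvd_choose_two_mul (p : ℕ) (hp : p.Prime) (i : ℕ) (h1 : 1 ≤ i) (h2 : i < p) :
    p ∣ Nat.choose (2 * p) i := by
  haveI : Fact p.Prime := ⟨hp⟩
  have h := Choose.choose_modEq_choose_mod_mul_choose_div_nat (n := 2 * p) (k := i) (p := p)
  rw [Nat.mul_mod_left, Nat.mod_eq_of_lt h2] at h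
  rw [Nat.choose_eq_zero_of_lt (by omega : (0:ℕ) < i), zero_mul] at h
  exact (Nat.modEq_zero_iff_dvd).mp h

lemma pdvd_choose_pred (p : ℕ) (hp : p.Prime) (m : ℕ) (hm : ¬ p ∣ m) :
    p ∣ Nat.choose (m - 1) (p - 1) := by
  haveI : Fact p.Prime := ⟨hp⟩
  have hppos : 0 < p := hp.pos
  have hm1 : 1 ≤ m := by
    rcases Nat.eq_zero_or_pos m with h | h
    · exact absurd (h ▸ dvd_zero p) hm
    · exact h
  have h := Choose.choose_modEq_choose_mod_mul_choose_div_nat (n := m - 1) (k := p - 1) (p := p)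
  rw [Nat.mod_eq_of_lt (by omega : p - 1 < p)] at h
  have hr : (m - 1) % p < p - 1 := by
    have hrlt : (m - 1) % p < p := Nat.mod_lt _ hppos
    rcases Nat.lt_or_ge ((m - 1) % p) (p - 1) with h' | h'
    · exact h'
    · exfalso
      have : (m - 1) % p = p - 1 := le_antisymm (by omega) h'
      apply hm
      have := Nat.div_add_mod (m - 1) p
      have hm' : m = p * ((m - 1) / p) + p := by omega
      have hdm := Nat.div_add_mod (m - 1) p
      exact ⟨(m - 1) / p + 1, by rw [Nat.mul_add, Nat.mul_one]; omega⟩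
  rw [Nat.choose_eq_zero_of_lt hr, zero_mul] at h
  exact (Nat.modEq_zero_iff_dvd).mp h

theorem c2pp_not_dvd (p : ℕ) (hp : p.Prime) (n : ℕ) (hn : 0 < n) (hnd : ¬ p ∣ n) :
    ckj (2 * p) p n ≡ 0 [MOD p] := by
  rw [Nat.modEq_zero_iff_dvd, ckj]
  apply Finset.dvd_sum
  intro P _
  -- find a part whose multiplicity is not divisible by p
  have hsum : P.parts.sum = n := P.parts_sum
  have hex : ∃ s ∈ P.parts.toFinset, ¬ p ∣ P.parts.count s := by
    by_contra h
    push_neg at h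
    apply hnd
    rw [← hsum, Finset.sum_multiset_count P.parts]
    apply Finset.dvd_sum
    intro s hs
    exact Dvd.dvd.mul_right (h s hs) s
  obtain ⟨s, hs, hcount⟩ := hex
  refine dvd_trans ?_ (Finset.dvd_prod_of_mem _ hs)
  apply Finset.dvd_sum
  intro i hi
  rw [Finset.mem_Icc] at hi
  rcases eq_or_lt_of_le hi.2 with h | h
  · subst h
    exact Dvd.dvd.mul_left (pdvd_choose_pred i hp _ hcount) _
  · exact Dvd.dvd.mul_right (pdvd_choose_two_mul p hp i hi.1 h) _
end

section
/- Let p be a prime and n ≥ 0 an integer. Then c_{2p,p}(pn) ≡ \bar{p}(n) (mod p), where \bar{p}(n) is the number of overpartitions of n. -/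
section aux

variable {p : ℕ}

lemma choose_two_mul_self (hp : p.Prime) : ((2 * p).choose p : ZMod p) = 2 := by
  haveI := Fact.mk hp
  have h := (Choose.choose_modEq_choose_mod_mul_choose_div_nat (p := p) (n := 2 * p) (k := p))
  rw [← ZMod.natCast_eq_natCast_iff] at h
  rw [h, Nat.mul_mod_left, Nat.mul_div_cancel _ hp.pos, Nat.mod_self, Nat.div_self hp.pos]
  simp

lemma choose_two_mul_eq_zero (hp : p.Prime) {i : ℕ} (h1 : 1 ≤ i) (h2 : i < p) :
    ((2 * p).choose i : ZMod p) = 0 := by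
  haveI := Fact.mk hp
  have h := (Choose.choose_modEq_choose_mod_mul_choose_div_nat (p := p) (n := 2 * p) (k := i))
  rw [← ZMod.natCast_eq_natCast_iff] at h
  rw [h]
  rw [Nat.mul_mod_left, Nat.mod_eq_of_lt h2, Nat.div_eq_of_lt h2]
  simp [Nat.choose_eq_zero_of_lt (lt_of_lt_of_le Nat.zero_lt_one h1)]

lemma choose_pred_pm1 (hp : p.Prime) {m : ℕ} (hm : 1 ≤ m) :
    ((m - 1).choose (p - 1) : ZMod p) = if p ∣ m then 1 else 0 := by
  haveI := Fact.mk hp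
  have h := (Choose.choose_modEq_choose_mod_mul_choose_div_nat (p := p) (n := m - 1) (k := p - 1))
  rw [← ZMod.natCast_eq_natCast_iff] at h
  have hp1 : p - 1 < p := Nat.sub_lt hp.pos Nat.one_pos
  rw [h, Nat.mod_eq_of_lt hp1, Nat.div_eq_of_lt hp1]
  by_cases hd : p ∣ m
  · obtain ⟨q, rfl⟩ := hd
    have hq : 1 ≤ q := by
      rcases Nat.eq_zero_or_pos q with h0 | h0
      · simp [h0] at hm
      · exact h0
    have hqe : p * q - 1 = p * (q - 1) + (p - 1) := by
      obtain ⟨q', rfl⟩ := Nat.exists_eq_add_of_le hq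
      simp only [Nat.add_sub_cancel_left, Nat.mul_add, Nat.mul_one]
      have := hp.pos
      omega
    rw [if_pos ⟨q, rfl⟩, hqe, Nat.mul_add_mod, Nat.mod_eq_of_lt hp1]
    simp
  · rw [if_neg hd]
    have hr : m % p ≠ 0 := fun h0 => hd (Nat.dvd_of_mod_eq_zero h0)
    have hm1 : m - 1 = p * (m / p) + (m % p - 1) := by
      have := Nat.mod_lt m hp.pos
      have := (Nat.div_add_mod m p).symm
      omega
    have hlt : m % p - 1 < p := by
      have := Nat.mod_lt m hp.pos
      omega
    rw [hm1, Nat.mul_add_mod, Nat.mod_eq_of_lt hlt]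
    have : m % p - 1 < p - 1 := by
      have := Nat.mod_lt m hp.pos
      omega
    simp [Nat.choose_eq_zero_of_lt this]

lemma innerSumZMod (hp : p.Prime) {c : ℕ} (hc : 1 ≤ c) :
    ((∑ i ∈ Finset.Icc 1 p, Nat.choose (2 * p) i * Nat.choose (c - 1) (i - 1) : ℕ) : ZMod p)
      = if p ∣ c then 2 else 0 := by
  push_cast
  rw [Finset.sum_eq_single_of_mem p (by rw [Finset.mem_Icc]; exact ⟨hp.one_lt.le, le_refl p⟩)]
  · rw [choose_two_mul_self hp, choose_pred_pm1 hp hc]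
    split_ifs <;> ring
  · intro i hi hne
    rw [Finset.mem_Icc] at hi
    rw [choose_two_mul_eq_zero hp hi.1 (lt_of_le_of_ne hi.2 hne), zero_mul]

/-- Scaling a partition of n by p gives a partition of p * n. -/
def scalePart (hp : 0 < p) {n : ℕ} (Q : n.Partition) : (p * n).Partition where
  parts := p • Q.parts
  parts_pos := fun hi => Q.parts_pos (Multiset.mem_of_mem_nsmul hi)
  parts_sum := by
    rw [Multiset.sum_nsmul, Q.parts_sum, smul_eq_mul]

lemma scalePart_parts (hp : 0 < p) {n : ℕ} (Q : n.Partition) :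
    (scalePart hp Q).parts = p • Q.parts := rfl

lemma scalePart_toFinset (hp : 0 < p) {n : ℕ} (Q : n.Partition) :
    (scalePart hp Q).parts.toFinset = Q.parts.toFinset := by
  ext a
  simp [scalePart_parts, Multiset.mem_toFinset, Multiset.mem_nsmul, hp.ne']

end aux

theorem c2pp_dvd (p : ℕ) (hp : p.Prime) (n : ℕ) :
    ckj (2 * p) p (p * n) ≡ overp n [MOD p] := by
  rw [← ZMod.natCast_eq_natCast_iff]
  unfold ckj overp
  push_cast
  have step1 : ∀ P : (p * n).Partition,
      (∏ s ∈ P.parts.toFinset, ((∑ i ∈ Finset.Icc 1 p,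
          Nat.choose (2 * p) i * Nat.choose (P.parts.count s - 1) (i - 1) : ℕ) : ZMod p))
        = if ∀ s ∈ P.parts.toFinset, p ∣ P.parts.count s
            then (2 : ZMod p) ^ P.parts.toFinset.card else 0 := by
    intro P
    have hcount : ∀ s ∈ P.parts.toFinset, 1 ≤ P.parts.count s := by
      intro s hs
      rw [Multiset.mem_toFinset] at hs
      exact Multiset.one_le_count_iff_mem.mpr hs
    by_cases hall : ∀ s ∈ P.parts.toFinset, p ∣ P.parts.count s
    · rw [if_pos hall, ← Finset.prod_const]
      apply Finset.prod_congr rfl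
      intro s hs
      rw [innerSumZMod hp (hcount s hs), if_pos (hall s hs)]
    · rw [if_neg hall]
      push_neg at hall
      obtain ⟨s, hs, hnd⟩ := hall
      apply Finset.prod_eq_zero hs
      rw [innerSumZMod hp (hcount s hs), if_neg hnd]
  have step2 : (∑ P : (p * n).Partition, ∏ s ∈ P.parts.toFinset,
      ((∑ i ∈ Finset.Icc 1 p,
          Nat.choose (2 * p) i * Nat.choose (P.parts.count s - 1) (i - 1) : ℕ) : ZMod p))
      = ∑ P ∈ Finset.univ.filter
          (fun P : (p * n).Partition => ∀ s ∈ P.parts.toFinset, p ∣ P.parts.count s),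
          (2 : ZMod p) ^ P.parts.toFinset.card := by
    rw [Finset.sum_filter]
    exact Finset.sum_congr rfl fun P _ => step1 P
  have cast_eq : (∑ P : (p * n).Partition, ∏ s ∈ P.parts.toFinset,
      ((∑ i ∈ Finset.Icc 1 p,
          Nat.choose (2 * p) i * Nat.choose (P.parts.count s - 1) (i - 1) : ℕ) : ZMod p))
      = ∑ P : (p * n).Partition, ∏ s ∈ P.parts.toFinset,
          (∑ i ∈ Finset.Icc 1 p, ((2 * p).choose i : ZMod p)
            * ((P.parts.count s - 1).choose (i - 1) : ZMod p)) := by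
    apply Finset.sum_congr rfl
    intro P _
    apply Finset.prod_congr rfl
    intro s _
    push_cast
    rfl
  rw [← cast_eq, step2]
  -- now the bijection
  apply Finset.sum_bij
    (i := fun (Q : n.Partition) _ => scalePart hp.pos Q)
    (hi := ?_) (i_inj := ?_) (i_surj := ?_) (h := ?_) |>.symm
  · intro Q _
    rw [Finset.mem_filter]
    refine ⟨Finset.mem_univ _, fun s _ => ?_⟩
    rw [scalePart_parts, Multiset.count_nsmul]
    exact Dvd.intro _ rfl
  · intro Q1 _ Q2 _ h
    have h' : p • Q1.parts = p • Q2.parts := congrArg Nat.Partition.parts h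
    apply Nat.Partition.ext
    ext a
    have := congrArg (Multiset.count a) h'
    rw [Multiset.count_nsmul, Multiset.count_nsmul] at this
    exact Nat.eq_of_mul_eq_mul_left hp.pos this
  · intro P hP
    rw [Finset.mem_filter] at hP
    obtain ⟨-, hdvd⟩ := hP
    set m : Multiset ℕ :=
      ∑ s ∈ P.parts.toFinset, Multiset.replicate (P.parts.count s / p) s with hm
    have hcm : ∀ a, m.count a = if a ∈ P.parts.toFinset then P.parts.count a / p else 0 := by
      intro a
      rw [hm, Multiset.count_sum']
      rw [Finset.sum_congr rfl (fun s _ => Multiset.count_replicate a s _)]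
      simp [Finset.sum_ite_eq']
    have key : p • m = P.parts := by
      ext a
      rw [Multiset.count_nsmul, hcm]
      by_cases ha : a ∈ P.parts.toFinset
      · rw [if_pos ha, Nat.mul_div_cancel' (hdvd a ha)]
      · rw [if_neg ha, mul_zero]
        rw [Multiset.mem_toFinset] at ha
        exact (Multiset.count_eq_zero.mpr ha).symm
    have hQpos : ∀ i ∈ m, 0 < i := by
      intro i hi
      apply P.parts_pos
      rw [← key, Multiset.mem_nsmul]
      exact ⟨hp.pos.ne', hi⟩
    have hQsum : m.sum = n := by
      have : (p • m).sum = p * n := by rw [key, P.parts_sum]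
      rw [Multiset.sum_nsmul, smul_eq_mul] at this
      exact Nat.eq_of_mul_eq_mul_left hp.pos this
    refine ⟨⟨m, fun hi => hQpos _ hi, hQsum⟩, Finset.mem_univ _, ?_⟩
    apply Nat.Partition.ext
    exact key
  · intro Q _
    rw [scalePart_toFinset]
end

section
/- For every integer n ≥ 0, c_{9,8}(n) = Σ_{t ∈ ℤ} (−1)^t c_{9,9}(n − 9·t(3t−1)/2), where the sum runs over all integers t with 9·t(3t−1)/2 ≤ n and c_{9,9}(n) = c_9(n) is the number of 9-colored partitions of n. (That is, the two functions are linked by the pentagonal-number recurrence magnified by 9, coming from C_{9,8}(q) = (q⁹;q⁹)_∞ · C_{9,9}(q).) -/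
open Finset

/-- run length: the length of the maximal run of consecutive integers at the top of `S`. -/
def runLen (S : Finset ℕ) (h : S.Nonempty) : ℕ :=
  Nat.findGreatest (fun r => Finset.Icc (S.max' h + 1 - r) (S.max' h) ⊆ S) (S.max' h)

/-- Franklin's involution. -/
def franklin (S : Finset ℕ) : Finset ℕ :=
  if h : S.Nonempty then
    let M := S.max' h
    let m := S.min' h
    let L := runLen S h
    if m ≤ L then insert (M+1) ((S.erase m).erase (M+1-m))
    else insert (M-L) (insert L (S.erase M))
  else ∅

def isFix (S : Finset ℕ) : Prop :=
  ∃ k : ℕ, 1 ≤ k ∧ (S = Finset.Icc k (2*k-1) ∨ S = Finset.Icc (k+1) (2*k))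

lemma mem_le_sum {x : ℕ} {T : Finset ℕ} (hx : x ∈ T) : x ≤ T.sum id :=
  Finset.single_le_sum (f := id) (fun i _ => Nat.zero_le i) hx

section run
variable {S : Finset ℕ} (h : S.Nonempty) (hpos : ∀ x ∈ S, 0 < x)

lemma franklin_of_nonempty :
    franklin S = if S.min' h ≤ runLen S h then
        insert (S.max' h + 1) ((S.erase (S.min' h)).erase (S.max' h + 1 - S.min' h))
      else insert (S.max' h - runLen S h) (insert (runLen S h) (S.erase (S.max' h))) := by
  rw [franklin, dif_pos h]

omit hpos in
lemma min'_le_max'' : S.min' h ≤ S.max' h := S.min'_le _ (S.max'_mem h)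

include hpos

lemma one_le_max' : 1 ≤ S.max' h :=
  le_trans (hpos _ (S.min'_mem h)) (min'_le_max'' h)

omit hpos in
lemma top_run (r : ℕ) (hr : r ≤ 1) : Finset.Icc (S.max' h + 1 - r) (S.max' h) ⊆ S := by
  intro x hx
  simp only [Finset.mem_Icc] at hx
  have : x = S.max' h := by omega
  subst this; exact S.max'_mem h

lemma runLen_pos : 1 ≤ runLen S h :=
  Nat.le_findGreatest (one_le_max' h hpos) (top_run h 1 le_rfl)

omit hpos in
lemma runLen_le : runLen S h ≤ S.max' h := Nat.findGreatest_le _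

lemma run_subset : Finset.Icc (S.max' h + 1 - runLen S h) (S.max' h) ⊆ S :=
  Nat.findGreatest_spec (P := fun r => Finset.Icc (S.max' h + 1 - r) (S.max' h) ⊆ S)
    (one_le_max' h hpos) (top_run h 1 le_rfl)

lemma max_sub_runLen_not_mem : S.max' h - runLen S h ∉ S := by
  rcases eq_or_lt_of_le (runLen_le h) with heq | hlt
  · rw [heq]; simp only [Nat.sub_self]
    intro h0; exact absurd (hpos 0 h0) (by omega)
  · intro hmem
    have hgt : ¬ (Finset.Icc (S.max' h + 1 - (runLen S h + 1)) (S.max' h) ⊆ S) := by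
      apply Nat.findGreatest_is_greatest (Nat.lt_succ_self (runLen S h)) (by omega)
    apply hgt
    intro x hx
    simp only [Finset.mem_Icc] at hx
    rcases eq_or_lt_of_le hx.1 with heq2 | hlt2
    · have : x = S.max' h - runLen S h := by omega
      subst this; exact hmem
    · exact run_subset h hpos (by simp only [Finset.mem_Icc]; omega)

lemma min'_le_run_bot : S.min' h ≤ S.max' h + 1 - runLen S h := by
  apply S.min'_le
  apply run_subset h hpos
  simp only [Finset.mem_Icc]
  have := runLen_pos h hpos
  have := runLen_le (S := S) h
  omega

omit hpos in
lemma staircase_of_min_eq (heq : S.min' h = S.max' h + 1 - runLen S h)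
    (hrun : Finset.Icc (S.max' h + 1 - runLen S h) (S.max' h) ⊆ S) :
    S = Finset.Icc (S.min' h) (S.max' h) := by
  apply Finset.Subset.antisymm
  · intro x hx
    simp only [Finset.mem_Icc]
    exact ⟨S.min'_le x hx, S.le_max' x hx⟩
  · rw [heq]; exact hrun

lemma isFix_iff : isFix S ↔ (S = Finset.Icc (S.min' h) (S.max' h) ∧
    (S.max' h + 1 = 2 * S.min' h ∨ S.max' h + 2 = 2 * S.min' h)) := by
  constructor
  · rintro ⟨k, hk, hS | hS⟩
    · have hmin : S.min' h = k := by
        apply le_antisymm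
        · exact S.min'_le k (by rw [hS]; simp only [Finset.mem_Icc]; omega)
        · apply S.le_min' h; intro y hy; rw [hS] at hy
          simp only [Finset.mem_Icc] at hy; omega
      have hmax : S.max' h = 2*k-1 := by
        apply le_antisymm
        · apply S.max'_le h; intro y hy; rw [hS] at hy
          simp only [Finset.mem_Icc] at hy; omega
        · exact S.le_max' _ (by rw [hS]; simp only [Finset.mem_Icc]; omega)
      exact ⟨by rw [hmin, hmax]; exact hS, by omega⟩
    · have hne2 : (Finset.Icc (k+1) (2*k)).Nonempty := ⟨k+1, by simp only [Finset.mem_Icc]; omega⟩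
      have hmin : S.min' h = k+1 := by
        apply le_antisymm
        · exact S.min'_le _ (by rw [hS]; simp only [Finset.mem_Icc]; omega)
        · apply S.le_min' h; intro y hy; rw [hS] at hy
          simp only [Finset.mem_Icc] at hy; omega
      have hmax : S.max' h = 2*k := by
        apply le_antisymm
        · apply S.max'_le h; intro y hy; rw [hS] at hy
          simp only [Finset.mem_Icc] at hy; omega
        · exact S.le_max' _ (by rw [hS]; simp only [Finset.mem_Icc]; omega)
      exact ⟨by rw [hmin, hmax]; exact hS, by omega⟩
  · rintro ⟨hS, hcase | hcase⟩
    · refine ⟨S.min' h, hpos _ (S.min'_mem h), Or.inl ?_⟩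
      have : 2 * S.min' h - 1 = S.max' h := by omega
      rw [this]; exact hS
    · have h2 : 2 ≤ S.min' h := by
        have := min'_le_max'' h; omega
      refine ⟨S.min' h - 1, by omega, Or.inr ?_⟩
      have h3 : S.min' h - 1 + 1 = S.min' h := by omega
      have h4 : 2 * (S.min' h - 1) = S.max' h := by omega
      rw [h3, h4]; exact hS
end run

section cases
variable {S : Finset ℕ}

lemma caseA (h : S.Nonempty) (hpos : ∀ x ∈ S, 0 < x) (hfix : ¬ isFix S)
    (hml : S.min' h ≤ runLen S h) :
    (franklin S).Nonempty ∧ (∀ x ∈ franklin S, 0 < x) ∧ (franklin S).sum id = S.sum id ∧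
    (franklin S).card + 1 = S.card ∧ ¬ isFix (franklin S) ∧ franklin (franklin S) = S := by
  set M := S.max' h with hM
  set m := S.min' h with hm
  set L := runLen S h with hL
  have hm1 : 1 ≤ m := hpos _ (S.min'_mem h)
  have hmM : m ≤ M := min'_le_max'' h
  have hL1 : 1 ≤ L := runLen_pos h hpos
  have hLM : L ≤ M := runLen_le h
  have hrun := run_subset h hpos
  have hKm : m ≤ M + 1 - L := min'_le_run_bot h hpos
  have hmem : m ∈ S := S.min'_mem h
  have hnotstair : ¬ (S = Finset.Icc m M ∧ (M + 1 = 2 * m ∨ M + 2 = 2 * m)) := by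
    rw [← isFix_iff h hpos]; exact hfix
  have key1 : m < M + 1 - m := by
    rcases lt_or_ge m (M + 1 - m) with h1 | h1
    · exact h1
    · exfalso
      have heq : m = M + 1 - L := by omega
      exact hnotstair ⟨staircase_of_min_eq h heq hrun, by omega⟩
  have key2 : M + 1 - m ∈ S := hrun (by simp only [Finset.mem_Icc]; omega)
  have key3 : M + 1 ∉ S := fun c => absurd (S.le_max' _ c) (by omega)
  have hfr : franklin S = insert (M+1) ((S.erase m).erase (M+1-m)) := by
    rw [franklin_of_nonempty h, if_pos hml]
  set S' := insert (M+1) ((S.erase m).erase (M+1-m)) with hS'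
  have memS' : ∀ x, x ∈ S' ↔ x = M+1 ∨ (x ∈ S ∧ x ≠ m ∧ x ≠ M+1-m) := by
    intro x
    simp only [hS', mem_insert, mem_erase]
    tauto
  have h'ne : S'.Nonempty := ⟨M+1, mem_insert_self _ _⟩
  have h'pos : ∀ x ∈ S', 0 < x := by
    intro x hx
    rcases (memS' x).mp hx with rfl | ⟨hx2, _, _⟩
    · omega
    · exact hpos _ hx2
  have hMnotin : M + 1 ∉ (S.erase m).erase (M+1-m) := by
    intro hc
    exact key3 (mem_of_mem_erase (mem_of_mem_erase hc))
  have e1 : (S.erase m).sum id + m = S.sum id := Finset.sum_erase_add _ _ hmem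
  have e2 : ((S.erase m).erase (M+1-m)).sum id + (M+1-m) = (S.erase m).sum id :=
    Finset.sum_erase_add _ _ (mem_erase.mpr ⟨by omega, key2⟩)
  have e3 : S'.sum id = (M+1) + ((S.erase m).erase (M+1-m)).sum id := Finset.sum_insert hMnotin
  have hsum : S'.sum id = S.sum id := by simp only [id] at e1 e2 e3 ⊢; omega
  have c1 : (S.erase m).card + 1 = S.card := Finset.card_erase_add_one hmem
  have c2 : ((S.erase m).erase (M+1-m)).card + 1 = (S.erase m).card :=
    Finset.card_erase_add_one (mem_erase.mpr ⟨by omega, key2⟩)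
  have c3 : S'.card = ((S.erase m).erase (M+1-m)).card + 1 := Finset.card_insert_of_notMem hMnotin
  have hcard : S'.card + 1 = S.card := by omega
  have hmax' : S'.max' h'ne = M + 1 := by
    apply le_antisymm
    · apply max'_le
      intro y hy
      rcases (memS' y).mp hy with rfl | ⟨hy2, _, _⟩
      · exact le_rfl
      · exact le_trans (S.le_max' _ hy2) (by omega)
    · exact le_max' _ _ (mem_insert_self _ _)
  have hminbound : ∀ x ∈ S', m + 1 ≤ x := by
    intro x hx
    rcases (memS' x).mp hx with rfl | ⟨hx2, hx3, _⟩
    · omega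
    · have := S.min'_le _ hx2; omega
  have hL' : runLen S' h'ne = m := by
    apply le_antisymm
    · by_contra hlt
      push_neg at hlt
      have hsub := run_subset h'ne h'pos
      have hmm : M + 1 - m ∈ S' := by
        apply hsub
        simp only [Finset.mem_Icc, hmax']
        have := runLen_le (S := S') h'ne
        omega
      rcases (memS' _).mp hmm with heq | ⟨_, _, hne2⟩
      · omega
      · exact hne2 rfl
    · apply Nat.le_findGreatest (by rw [hmax']; omega)
      intro x hx
      simp only [Finset.mem_Icc, hmax'] at hx
      rcases eq_or_lt_of_le hx.2 with rfl | hxM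
      · exact mem_insert_self _ _
      · apply (memS' x).mpr
        right
        refine ⟨hrun (by simp only [Finset.mem_Icc]; omega), by omega, by omega⟩
  have hminS' : m + 1 ≤ S'.min' h'ne := le_min' _ _ _ hminbound
  have hfr2 : franklin S' = S := by
    rw [franklin_of_nonempty h'ne, if_neg (by rw [hL']; omega)]
    rw [hmax', hL']
    have herase : S'.erase (M+1) = (S.erase m).erase (M+1-m) := Finset.erase_insert hMnotin
    rw [herase]
    ext x
    simp only [mem_insert, mem_erase]
    constructor
    · rintro (rfl | rfl | ⟨_, _, hx⟩)
      · exact key2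
      · exact hmem
      · exact hx
    · intro hx
      by_cases h1 : x = M + 1 - m
      · exact Or.inl h1
      · by_cases h2 : x = m
        · exact Or.inr (Or.inl h2)
        · exact Or.inr (Or.inr ⟨h1, h2, hx⟩)
  have hnotfix' : ¬ isFix S' := by
    intro hfx
    obtain ⟨hstair, hcases⟩ := (isFix_iff h'ne h'pos).mp hfx
    have hnm : M + 1 - m < S'.min' h'ne := by
      rcases lt_or_ge (M + 1 - m) (S'.min' h'ne) with h1 | h1
      · exact h1
      · exfalso
        have hmm : M + 1 - m ∈ S' := by
          rw [hstair]
          simp only [Finset.mem_Icc, hmax']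
          omega
        rcases (memS' _).mp hmm with heq | ⟨_, _, hne2⟩
        · omega
        · exact hne2 rfl
    have hmin' : S'.min' h'ne = M + 2 - m := by
      apply le_antisymm
      · apply min'_le
        apply (memS' _).mpr
        by_cases hm2 : m = 1
        · left; omega
        · right
          refine ⟨hrun (by simp only [Finset.mem_Icc]; omega), by omega, by omega⟩
      · apply le_min' _ _ _
        intro y hy
        rcases (memS' y).mp hy with rfl | ⟨hy2, hy3, hy4⟩
        · omega
        · have h5 := S.min'_le _ hy2
          have h6 := S.le_max' _ hy2
          rcases lt_or_ge y (M + 1 - m) with h7 | h7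
          · exfalso
            have : y ∈ S' := hy
            have := S'.min'_le _ this
            omega
          · omega
    rcases hcases with hc | hc
    · rw [hmax', hmin'] at hc
      have := S.min'_le _ key2
      omega
    · rw [hmax', hmin'] at hc
      have h2m : 2 * m = M + 1 := by omega
      apply hnotstair
      constructor
      · apply Finset.Subset.antisymm
        · intro x hx
          simp only [Finset.mem_Icc]
          exact ⟨S.min'_le _ hx, S.le_max' _ hx⟩
        · intro x hx
          simp only [Finset.mem_Icc] at hx
          exact hrun (by simp only [Finset.mem_Icc]; omega)
      · omega
  rw [hfr]
  exact ⟨h'ne, h'pos, hsum, hcard, hnotfix', hfr2⟩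

lemma caseB (h : S.Nonempty) (hpos : ∀ x ∈ S, 0 < x) (hfix : ¬ isFix S)
    (hml : runLen S h < S.min' h) :
    (franklin S).Nonempty ∧ (∀ x ∈ franklin S, 0 < x) ∧ (franklin S).sum id = S.sum id ∧
    S.card + 1 = (franklin S).card ∧ ¬ isFix (franklin S) ∧ franklin (franklin S) = S := by
  set M := S.max' h with hM
  set m := S.min' h with hm
  set L := runLen S h with hL
  have hm1 : 1 ≤ m := hpos _ (S.min'_mem h)
  have hmM : m ≤ M := min'_le_max'' h
  have hL1 : 1 ≤ L := runLen_pos h hpos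
  have hLM : L ≤ M := runLen_le h
  have hrun := run_subset h hpos
  have hKm : m ≤ M + 1 - L := min'_le_run_bot h hpos
  have hMmem : M ∈ S := S.max'_mem h
  have hMLnot : M - L ∉ S := max_sub_runLen_not_mem h hpos
  have hLnot : L ∉ S := fun c => absurd (S.min'_le _ c) (by omega)
  have hnotstair : ¬ (S = Finset.Icc m M ∧ (M + 1 = 2 * m ∨ M + 2 = 2 * m)) := by
    rw [← isFix_iff h hpos]; exact hfix
  have hb0 : L < M - L := by
    rcases lt_or_ge L (M - L) with h1 | h1
    · exact h1
    · exfalso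
      have hM2L : M = 2 * L := by omega
      have heq : m = M + 1 - L := by omega
      exact hnotstair ⟨staircase_of_min_eq h heq hrun, by omega⟩
  have hfr : franklin S = insert (M-L) (insert L (S.erase M)) := by
    rw [franklin_of_nonempty h, if_neg (by omega)]
  set S' := insert (M-L) (insert L (S.erase M)) with hS'
  have memS' : ∀ x, x ∈ S' ↔ x = M-L ∨ x = L ∨ (x ∈ S ∧ x ≠ M) := by
    intro x
    simp only [hS', mem_insert, mem_erase]
    tauto
  have h'ne : S'.Nonempty := ⟨M-L, mem_insert_self _ _⟩
  have h'pos : ∀ x ∈ S', 0 < x := by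
    intro x hx
    rcases (memS' x).mp hx with rfl | rfl | ⟨hx2, _⟩
    · omega
    · omega
    · exact hpos _ hx2
  have hnot1 : M - L ∉ insert L (S.erase M) := by
    simp only [mem_insert, mem_erase]
    rintro (hc | ⟨-, hc⟩)
    · omega
    · exact hMLnot hc
  have hnot2 : L ∉ S.erase M := fun c => hLnot (mem_of_mem_erase c)
  have e1 : (S.erase M).sum id + M = S.sum id := Finset.sum_erase_add _ _ hMmem
  have e2 : S'.sum id = (M-L) + ((insert L (S.erase M)).sum id) := Finset.sum_insert hnot1
  have e3 : (insert L (S.erase M)).sum id = L + (S.erase M).sum id := Finset.sum_insert hnot2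
  have hsum : S'.sum id = S.sum id := by simp only [id] at e1 e2 e3 ⊢; omega
  have c1 : (S.erase M).card + 1 = S.card := Finset.card_erase_add_one hMmem
  have c2 : S'.card = (insert L (S.erase M)).card + 1 := Finset.card_insert_of_notMem hnot1
  have c3 : (insert L (S.erase M)).card = (S.erase M).card + 1 := Finset.card_insert_of_notMem hnot2
  have hcard : S.card + 1 = S'.card := by omega
  have hmax' : S'.max' h'ne = M - 1 := by
    apply le_antisymm
    · apply max'_le
      intro y hy
      rcases (memS' y).mp hy with rfl | rfl | ⟨hy2, hy3⟩
      · omega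
      · omega
      · have := S.le_max' _ hy2; omega
    · apply le_max'
      apply (memS' _).mpr
      by_cases hL2 : L = 1
      · left; omega
      · right; right
        exact ⟨hrun (by simp only [Finset.mem_Icc]; omega), by omega⟩
  have hminS' : S'.min' h'ne = L := by
    apply le_antisymm
    · exact min'_le _ _ ((memS' _).mpr (Or.inr (Or.inl rfl)))
    · apply le_min'
      intro y hy
      rcases (memS' y).mp hy with rfl | rfl | ⟨hy2, _⟩
      · omega
      · omega
      · have := S.min'_le _ hy2; omega
  have hL'ge : L ≤ runLen S' h'ne := by
    apply Nat.le_findGreatest (by rw [hmax']; omega)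
    intro x hx
    simp only [Finset.mem_Icc, hmax'] at hx
    apply (memS' x).mpr
    rcases eq_or_lt_of_le hx.1 with heq | hlt
    · left; omega
    · right; right
      exact ⟨hrun (by simp only [Finset.mem_Icc]; omega), by omega⟩
  have hfr2 : franklin S' = S := by
    rw [franklin_of_nonempty h'ne, if_pos (by rw [hminS']; exact hL'ge)]
    rw [hmax', hminS']
    have hr1 : M - 1 + 1 = M := by omega
    rw [hr1]
    ext x
    simp only [mem_insert, mem_erase, memS']
    constructor
    · rintro (rfl | ⟨hx1, hx2, (rfl | rfl | ⟨hx3, _⟩)⟩)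
      · exact hMmem
      · exact absurd rfl hx1
      · exact absurd rfl hx2
      · exact hx3
    · intro hx
      by_cases hxM : x = M
      · exact Or.inl hxM
      · right
        refine ⟨?_, ?_, Or.inr (Or.inr ⟨hx, hxM⟩)⟩
        · intro hc; rw [hc] at hx; exact hMLnot hx
        · intro hc; rw [hc] at hx; exact hLnot hx
  have hnotfix' : ¬ isFix S' := by
    intro hfx
    obtain ⟨hstair, hcases⟩ := (isFix_iff h'ne h'pos).mp hfx
    rw [hmax', hminS'] at hcases
    rcases hcases with hc | hc
    · omega
    · omega
  rw [hfr]
  exact ⟨h'ne, h'pos, hsum, hcard, hnotfix', hfr2⟩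

end cases

/-- signed indicator of generalized pentagonal numbers -/
noncomputable def pentSign (b : ℕ) : ℤ :=
  ∑ t ∈ Finset.Icc (-(b:ℤ)) (b:ℤ), if t * (3*t - 1) / 2 = (b:ℤ) then (-1)^t.natAbs else 0

lemma two_dvd_pent (t : ℤ) : 2 ∣ t * (3*t - 1) := by
  rcases Int.even_or_odd t with ⟨k, hk⟩ | ⟨k, hk⟩
  · exact Dvd.dvd.mul_right ⟨k, by omega⟩ _
  · exact Dvd.dvd.mul_left ⟨3*k + 1, by rw [hk]; ring⟩ _

lemma pent_mul_two (t : ℤ) : t * (3*t - 1) / 2 * 2 = t * (3*t - 1) :=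
  Int.ediv_mul_cancel (two_dvd_pent t)

lemma pent_ge_abs (t : ℤ) : (t.natAbs : ℤ) ≤ t * (3*t - 1) / 2 := by
  have h2 := pent_mul_two t
  rcases le_or_gt 0 t with ht | ht
  · have h1 : (t.natAbs : ℤ) = t := Int.natAbs_of_nonneg ht
    nlinarith [sq_nonneg (t - 1)]
  · have h1 : (t.natAbs : ℤ) = -t := Int.ofNat_natAbs_of_nonpos (le_of_lt ht)
    nlinarith [sq_nonneg t]

lemma pent_inj {t s : ℤ} (h : t * (3*t - 1) / 2 = s * (3*s - 1) / 2) : t = s := by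
  have h2 : t * (3*t - 1) = s * (3*s - 1) := by
    rw [← pent_mul_two t, ← pent_mul_two s, h]
  have h3 : (t - s) * (3*(t + s) - 1) = 0 := by ring_nf; linarith [h2]
  rcases mul_eq_zero.mp h3 with h4 | h4
  · omega
  · omega

lemma sum_Icc_nat (a c : ℕ) (h : a ≤ c) : (Finset.Icc a c).sum id * 2 = (a + c) * (c + 1 - a) := by
  induction c with
  | zero => interval_cases a <;> simp
  | succ n ih =>
    rcases Nat.lt_or_ge n a with h1 | h1
    · have : a = n + 1 := by omega
      subst this
      simp
      ring
    · rw [Finset.sum_Icc_succ_top (by omega)]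
      have hc : (Finset.Icc a n).sum id * 2 = (a + n) * (n + 1 - a) := ih h1
      simp only [id] at hc ⊢
      obtain ⟨j, rfl⟩ : ∃ j, n = a + j := ⟨n - a, by omega⟩
      have e1 : (a + (a + j + 1)) * ((a + j + 1) + 1 - a)
          = (a + (a + j)) * ((a + j) + 1 - a) + 2 * ((a + j) + 1) := by
        have r1 : (a + j + 1) + 1 - a = j + 2 := by omega
        have r2 : (a + j) + 1 - a = j + 1 := by omega
        rw [r1, r2]; ring
      omega

section pent
open scoped Classical

theorem pentagonal_sum (N b : ℕ) (hbN : b ≤ N) :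
    ∑ S ∈ (Finset.Icc 1 N).powerset.filter (fun S => S.sum id = b), (-1:ℤ)^S.card
      = pentSign b := by
  rw [← Finset.sum_filter_add_sum_filter_not
    ((Finset.Icc 1 N).powerset.filter (fun S => S.sum id = b))
    (fun S => S.Nonempty ∧ ¬ isFix S) (fun S => (-1:ℤ)^S.card)]
  have hbasic : ∀ S ∈ ((Finset.Icc 1 N).powerset.filter (fun S => S.sum id = b)).filter
      (fun S => S.Nonempty ∧ ¬ isFix S),
      S ⊆ Finset.Icc 1 N ∧ S.sum id = b ∧ S.Nonempty ∧ ¬ isFix S ∧ ∀ x ∈ S, 0 < x := by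
    intro S hS
    simp only [Finset.mem_filter, Finset.mem_powerset] at hS
    obtain ⟨⟨h1, h2⟩, h3, h4⟩ := hS
    refine ⟨h1, h2, h3, h4, fun x hx => ?_⟩
    have := h1 hx
    simp only [Finset.mem_Icc] at this
    omega
  have hspec : ∀ S, S.Nonempty → (∀ x ∈ S, 0 < x) → ¬ isFix S →
      (franklin S).Nonempty ∧ (∀ x ∈ franklin S, 0 < x) ∧ (franklin S).sum id = S.sum id ∧
      ((franklin S).card + 1 = S.card ∨ S.card + 1 = (franklin S).card) ∧
      ¬ isFix (franklin S) ∧ franklin (franklin S) = S := by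
    intro S h hpos hfix
    rcases le_or_gt (S.min' h) (runLen S h) with hml | hml
    · obtain ⟨a1, a2, a3, a4, a5, a6⟩ := caseA h hpos hfix hml
      exact ⟨a1, a2, a3, Or.inl a4, a5, a6⟩
    · obtain ⟨a1, a2, a3, a4, a5, a6⟩ := caseB h hpos hfix hml
      exact ⟨a1, a2, a3, Or.inr a4, a5, a6⟩
  have hzero : ∑ S ∈ ((Finset.Icc 1 N).powerset.filter (fun S => S.sum id = b)).filter
      (fun S => S.Nonempty ∧ ¬ isFix S), (-1:ℤ)^S.card = 0 := by
    apply Finset.sum_involution (fun S _ => franklin S)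
    · intro S hS
      obtain ⟨h1, h2, h3, h4, h5⟩ := hbasic S hS
      obtain ⟨b1, b2, b3, b4, b5, b6⟩ := hspec S h3 h5 h4
      rcases b4 with hc | hc
      · rw [← hc, pow_succ]; ring
      · rw [← hc, pow_succ]; ring
    · intro S hS _
      obtain ⟨h1, h2, h3, h4, h5⟩ := hbasic S hS
      obtain ⟨b1, b2, b3, b4, b5, b6⟩ := hspec S h3 h5 h4
      intro heq
      rw [heq] at b4
      omega
    · intro S hS
      obtain ⟨h1, h2, h3, h4, h5⟩ := hbasic S hS
      obtain ⟨b1, b2, b3, b4, b5, b6⟩ := hspec S h3 h5 h4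
      simp only [Finset.mem_filter, Finset.mem_powerset]
      refine ⟨⟨fun x hx => ?_, by rw [b3, h2]⟩, b1, b5⟩
      simp only [Finset.mem_Icc]
      refine ⟨b2 x hx, ?_⟩
      calc x ≤ (franklin S).sum id := mem_le_sum hx
        _ = b := by rw [b3, h2]
        _ ≤ N := hbN
    · intro S hS
      obtain ⟨h1, h2, h3, h4, h5⟩ := hbasic S hS
      exact (hspec S h3 h5 h4).2.2.2.2.2
  rw [hzero, zero_add]
  -- now the fixed-point part
  by_cases hb : b = 0
  · subst hb
    have hset : ((Finset.Icc 1 N).powerset.filter (fun S => S.sum id = 0)).filter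
        (fun S => ¬ (S.Nonempty ∧ ¬ isFix S)) = {∅} := by
      ext T
      simp only [Finset.mem_filter, Finset.mem_powerset, Finset.mem_singleton]
      constructor
      · rintro ⟨⟨hT1, hT2⟩, _⟩
        rw [Finset.eq_empty_iff_forall_notMem]
        intro x hx
        have hx1 := hT1 hx
        simp only [Finset.mem_Icc] at hx1
        have := mem_le_sum hx
        omega
      · rintro rfl
        simp [isFix]
    rw [hset]
    simp [pentSign]
  · -- b ≥ 1 : staircase fixed points ↔ pentagonal t
    have hpent : pentSign b = ∑ t ∈ (Finset.Icc (-(b:ℤ)) (b:ℤ)).filter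
        (fun t => t * (3*t - 1) / 2 = (b:ℤ)), (-1:ℤ)^t.natAbs := by
      rw [Finset.sum_filter]
      rfl
    rw [hpent]
    symm
    apply Finset.sum_bij (i := fun t _ =>
      if 0 < t then Finset.Icc t.natAbs (2*t.natAbs - 1) else Finset.Icc (t.natAbs + 1) (2*t.natAbs))
    · -- maps to
      intro t ht
      simp only [Finset.mem_filter, Finset.mem_Icc] at ht
      obtain ⟨⟨ht1, ht2⟩, ht3⟩ := ht
      have htne : t ≠ 0 := by
        intro h0; rw [h0] at ht3; norm_num at ht3; omega
      have h2b : t * (3*t - 1) = 2 * (b:ℤ) := by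
        rw [← pent_mul_two t, ht3]; ring
      set k := t.natAbs with hk
      have hk1 : 1 ≤ k := by
        simp only [hk]; omega
      simp only [Finset.mem_filter, Finset.mem_powerset]
      rcases lt_or_ge 0 t with htpos | htneg
      · rw [if_pos htpos]
        have hkt : (k:ℤ) = t := by simp only [hk]; omega
        have hsum2 : k * (3*k - 1) = 2 * b := by
          have : (k:ℤ) * (3*(k:ℤ) - 1) = 2*(b:ℤ) := by rw [hkt]; exact h2b
          have hcast : ((k * (3*k-1) : ℕ) : ℤ) = ((2*b : ℕ) : ℤ) := by
            push_cast [Nat.cast_sub (by omega : 1 ≤ 3*k)]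
            push_cast at this ⊢
            linarith [this]
          exact_mod_cast hcast
        have hsum : (Finset.Icc k (2*k-1)).sum id = b := by
          have := sum_Icc_nat k (2*k-1) (by omega)
          have hr : (k + (2*k-1)) * ((2*k-1) + 1 - k) = k * (3*k-1) := by
            have r1 : k + (2*k-1) = 3*k-1 := by omega
            have r2 : (2*k-1) + 1 - k = k := by omega
            rw [r1, r2, Nat.mul_comm]
          omega
        have htop : 2*k - 1 ≤ b := by
          obtain ⟨j, hj⟩ : ∃ j, k = j + 1 := ⟨k - 1, by omega⟩
          rw [hj] at hsum2
          have he : (j+1) * (3*(j+1)-1) = (j+1)*(3*j+2) := by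
            have h9 : 3*(j+1)-1 = 3*j+2 := by omega
            rw [h9]
          rw [he] at hsum2
          have hb2 : 2*j + 1 ≤ b := by nlinarith [hsum2]
          omega
        refine ⟨⟨fun x hx => ?_, hsum⟩, ?_⟩
        · simp only [Finset.mem_Icc] at hx ⊢
          omega
        · intro ⟨_, hnfix⟩
          exact hnfix ⟨k, hk1, Or.inl rfl⟩
      · have htneg' : t < 0 := lt_of_le_of_ne (by omega) htne
        rw [if_neg (by omega)]
        have hkt : (k:ℤ) = -t := by simp only [hk]; omega
        have hsum2 : k * (3*k + 1) = 2 * b := by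
          have : (k:ℤ) * (3*(k:ℤ) + 1) = 2*(b:ℤ) := by
            rw [hkt]; nlinarith [h2b]
          exact_mod_cast this
        have hsum : (Finset.Icc (k+1) (2*k)).sum id = b := by
          have := sum_Icc_nat (k+1) (2*k) (by omega)
          have hr : ((k+1) + 2*k) * (2*k + 1 - (k+1)) = k * (3*k+1) := by
            have r1 : (k+1) + 2*k = 3*k+1 := by omega
            have r2 : 2*k + 1 - (k+1) = k := by omega
            rw [r1, r2, Nat.mul_comm]
          omega
        have htop : 2*k ≤ b := by nlinarith [hsum2]
        refine ⟨⟨fun x hx => ?_, hsum⟩, ?_⟩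
        · simp only [Finset.mem_Icc] at hx ⊢
          omega
        · intro ⟨_, hnfix⟩
          exact hnfix ⟨k, hk1, Or.inr rfl⟩
    · -- injective
      intro t1 ht1 t2 ht2 _
      simp only [Finset.mem_filter] at ht1 ht2
      exact pent_inj (ht1.2.trans ht2.2.symm)
    · -- surjective
      intro S hS
      simp only [Finset.mem_filter, Finset.mem_powerset] at hS
      obtain ⟨⟨hS1, hS2⟩, hS3⟩ := hS
      have hSne : S.Nonempty := by
        rcases S.eq_empty_or_nonempty with rfl | hne
        · simp at hS2; omega
        · exact hne
      have hfix : isFix S := by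
        by_contra hc
        exact hS3 ⟨hSne, hc⟩
      obtain ⟨k, hk1, hcase | hcase⟩ := hfix
      · -- S = Icc k (2k-1), t = k
        have hsum2 : k * (3*k-1) = 2 * b := by
          have := sum_Icc_nat k (2*k-1) (by omega)
          have hr : (k + (2*k-1)) * ((2*k-1) + 1 - k) = k * (3*k-1) := by
            have r1 : k + (2*k-1) = 3*k-1 := by omega
            have r2 : (2*k-1) + 1 - k = k := by omega
            rw [r1, r2, Nat.mul_comm]
          rw [hcase] at hS2
          omega
        have hkb : k ≤ b := by
          have : k * 2 ≤ k * (3*k-1) := Nat.mul_le_mul_left k (by omega)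
          omega
        refine ⟨(k:ℤ), ?_, ?_⟩
        · simp only [Finset.mem_filter, Finset.mem_Icc]
          refine ⟨⟨by omega, by exact_mod_cast hkb⟩, ?_⟩
          have hcast : ((k:ℤ)) * (3*(k:ℤ) - 1) = 2 * (b:ℤ) := by
            have : ((k * (3*k-1) : ℕ) : ℤ) = ((2*b : ℕ):ℤ) := Nat.cast_inj.mpr hsum2
            push_cast [Nat.cast_sub (by omega : 1 ≤ 3*k)] at this
            linarith [this]
          rw [hcast]
          omega
        · rw [if_pos (by exact_mod_cast hk1), hcase]
          congr 1 <;> simp [Int.natAbs_ofNat]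
      · -- S = Icc (k+1) (2k), t = -k
        have hsum2 : k * (3*k+1) = 2 * b := by
          have := sum_Icc_nat (k+1) (2*k) (by omega)
          have hr : ((k+1) + 2*k) * (2*k + 1 - (k+1)) = k * (3*k+1) := by
            have r1 : (k+1) + 2*k = 3*k+1 := by omega
            have r2 : 2*k + 1 - (k+1) = k := by omega
            rw [r1, r2, Nat.mul_comm]
          rw [hcase] at hS2
          omega
        have hkb : k ≤ b := by
          have : k * 2 ≤ k * (3*k+1) := Nat.mul_le_mul_left k (by omega)
          omega
        refine ⟨-(k:ℤ), ?_, ?_⟩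
        · simp only [Finset.mem_filter, Finset.mem_Icc]
          refine ⟨⟨by simp; exact_mod_cast hkb, by omega⟩, ?_⟩
          have hcast : (-(k:ℤ)) * (3*(-(k:ℤ)) - 1) = 2 * (b:ℤ) := by
            have : ((k * (3*k+1) : ℕ) : ℤ) = ((2*b : ℕ):ℤ) := Nat.cast_inj.mpr hsum2
            push_cast at this
            nlinarith [this]
          rw [hcast]
          omega
        · rw [if_neg (by omega), hcase]
          congr 1 <;> simp
    · -- weights
      intro t ht
      simp only [Finset.mem_filter, Finset.mem_Icc] at ht
      obtain ⟨⟨ht1, ht2⟩, ht3⟩ := ht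
      have htne : t ≠ 0 := by
        intro h0; rw [h0] at ht3; norm_num at ht3; omega
      have hk1 : 1 ≤ t.natAbs := by omega
      rcases lt_or_ge 0 t with htpos | htneg
      · rw [if_pos htpos]
        congr 1
        rw [Nat.card_Icc]
        omega
      · rw [if_neg (by omega)]
        congr 1
        rw [Nat.card_Icc]
        omega
end pent


/-- weight of a multiplicity for 9 freely-colored partitions -/
def wc (c : ℕ) : ℕ :=
  if c = 0 then 1 else ∑ i ∈ Finset.Icc 1 9, Nat.choose 9 i * Nat.choose (c-1) (i-1)

lemma wc_zero : wc 0 = 1 := rfl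

lemma choose_eq_wc (c : ℕ) (hc : 9 ≤ c) : Nat.choose (c-1) 8 = wc (c - 9) := by
  rcases eq_or_lt_of_le hc with heq | hlt
  · rw [← heq]; simp [wc]
  · obtain ⟨d, hd⟩ : ∃ d, c = d + 10 := ⟨c - 10, by omega⟩
    subst hd
    have h1 : d + 10 - 9 = d + 1 := by omega
    have h2 : d + 10 - 1 = 9 + d := by omega
    rw [h1, h2, wc]
    rw [if_neg (by omega)]
    rw [Nat.add_choose_eq, Finset.Nat.sum_antidiagonal_eq_sum_range_succ_mk]
    apply Finset.sum_bij (i := fun r _ => 9 - r)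
    · intro r hr
      simp only [Finset.mem_range] at hr
      simp only [Finset.mem_Icc]
      omega
    · intro r1 h1 r2 h2 heq
      simp only [Finset.mem_range] at h1 h2
      omega
    · intro i hi
      simp only [Finset.mem_Icc] at hi
      exact ⟨9 - i, by simp only [Finset.mem_range]; omega, by omega⟩
    · intro r hr
      simp only [Finset.mem_range] at hr
      have e1 : Nat.choose 9 (9 - r) = Nat.choose 9 r := Nat.choose_symm (by omega)
      have e2 : (d + 1) - 1 = d := by omega
      have e3 : 9 - r - 1 = 8 - r := by omega
      rw [e1, e2, e3]

lemma wc_split (c : ℕ) (hc : 1 ≤ c) :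
    wc c = (∑ i ∈ Finset.Icc 1 8, Nat.choose 9 i * Nat.choose (c-1) (i-1))
      + Nat.choose (c-1) 8 := by
  rw [wc, if_neg (by omega)]
  rw [show (9:ℕ) = 8 + 1 from rfl, Finset.sum_Icc_succ_top (by omega)]
  simp

lemma ckj99_eq (m : ℕ) :
    ckj 9 9 m = ∑ Q : m.Partition, ∏ s ∈ Q.parts.toFinset, wc (Q.parts.count s) := by
  unfold ckj
  apply Finset.sum_congr rfl
  intro Q _
  apply Finset.prod_congr rfl
  intro s hs
  rw [wc, if_neg]
  rw [Multiset.mem_toFinset] at hs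
  simpa [Multiset.count_eq_zero] using hs

lemma expand_one {n : ℕ} (P : n.Partition) :
    ((∏ s ∈ P.parts.toFinset, ∑ i ∈ Finset.Icc 1 8,
        Nat.choose 9 i * Nat.choose (P.parts.count s - 1) (i-1) : ℕ) : ℤ)
    = ∑ T ∈ (P.parts.toFinset.filter (fun s => 9 ≤ P.parts.count s)).powerset,
        (-1:ℤ)^T.card *
          ∏ s ∈ P.parts.toFinset, (wc (P.parts.count s - if s ∈ T then 9 else 0) : ℤ) := by
  rw [Nat.cast_prod]
  have hfac : ∀ s ∈ P.parts.toFinset,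
      ((∑ i ∈ Finset.Icc 1 8, Nat.choose 9 i * Nat.choose (P.parts.count s - 1) (i-1) : ℕ) : ℤ)
      = (-((Nat.choose (P.parts.count s - 1) 8 : ℕ) : ℤ)) + ((wc (P.parts.count s) : ℕ) : ℤ) := by
    intro s hs
    rw [Multiset.mem_toFinset] at hs
    have hc : 1 ≤ P.parts.count s := Multiset.count_pos.mpr hs
    rw [wc_split _ hc]
    push_cast
    ring
  rw [Finset.prod_congr rfl hfac, Finset.prod_add]
  rw [← Finset.sum_subset
      (Finset.powerset_mono.mpr (Finset.filter_subset (fun s => 9 ≤ P.parts.count s) _))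
      ?vanish]
  case vanish =>
    intro T hT hTn
    simp only [Finset.mem_powerset] at hT hTn
    obtain ⟨s, hsT, hsn⟩ : ∃ s ∈ T, ¬ 9 ≤ P.parts.count s := by
      by_contra hcon
      push_neg at hcon
      exact hTn fun x hx => Finset.mem_filter.mpr ⟨hT hx, hcon x hx⟩
    apply mul_eq_zero_of_left
    apply Finset.prod_eq_zero hsT
    have : Nat.choose (P.parts.count s - 1) 8 = 0 := Nat.choose_eq_zero_of_lt (by omega)
    rw [this]
    simp
  apply Finset.sum_congr rfl
  intro T hT
  simp only [Finset.mem_powerset] at hT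
  have hTsupp : T ⊆ P.parts.toFinset := hT.trans (Finset.filter_subset _ _)
  have step1 : (∏ s ∈ T, (-((Nat.choose (P.parts.count s - 1) 8 : ℕ) : ℤ)))
      = (-1:ℤ)^T.card * ∏ s ∈ T, ((wc (P.parts.count s - 9) : ℕ) : ℤ) := by
    have e : ∀ s ∈ T, (-((Nat.choose (P.parts.count s - 1) 8 : ℕ) : ℤ))
        = (-1) * ((wc (P.parts.count s - 9) : ℕ) : ℤ) := by
      intro s hs
      have h9 : 9 ≤ P.parts.count s := (Finset.mem_filter.mp (hT hs)).2
      rw [choose_eq_wc _ h9]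
      ring
    rw [Finset.prod_congr rfl e, Finset.prod_mul_distrib, Finset.prod_const]
  rw [step1, mul_assoc]
  congr 1
  rw [← Finset.prod_sdiff hTsupp, mul_comm]
  congr 1
  · apply Finset.prod_congr rfl
    intro s hs
    rw [if_neg (Finset.mem_sdiff.mp hs).2, Nat.sub_zero]
  · apply Finset.prod_congr rfl
    intro s hs
    rw [if_pos hs]

lemma count_finset_val (T : Finset ℕ) (a : ℕ) : T.val.count a = if a ∈ T then 1 else 0 := by
  by_cases ha : a ∈ T
  · rw [if_pos ha]; exact Multiset.count_eq_one_of_mem T.nodup ha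
  · rw [if_neg ha]; exact Multiset.count_eq_zero_of_notMem ha

lemma nsmul_le {n : ℕ} (P : n.Partition) (T : Finset ℕ)
    (hcond : ∀ s ∈ T, 9 ≤ P.parts.count s) : 9 • T.val ≤ P.parts := by
  rw [Multiset.le_iff_count]
  intro a
  rw [Multiset.count_nsmul, count_finset_val]
  by_cases ha : a ∈ T
  · rw [if_pos ha, mul_one]; exact hcond a ha
  · rw [if_neg ha, mul_zero]; exact Nat.zero_le _

lemma sum_val (T : Finset ℕ) : T.sum id = T.val.sum := by
  rw [show T.sum id = (T.val.map id).sum from rfl, Multiset.map_id]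

lemma sliceSum {n : ℕ} (T : Finset ℕ) (hTn : 9 * T.sum id ≤ n) (hTpos : ∀ s ∈ T, 0 < s) :
    ∑ P ∈ Finset.univ.filter (fun P : n.Partition =>
        T ∈ (P.parts.toFinset.filter (fun s => 9 ≤ P.parts.count s)).powerset),
      ∏ s ∈ P.parts.toFinset, (wc (P.parts.count s - if s ∈ T then 9 else 0) : ℤ)
    = ∑ Q : (n - 9 * T.sum id).Partition,
        ∏ s ∈ Q.parts.toFinset, (wc (Q.parts.count s) : ℤ) := by
  have hRsum : (9 • T.val).sum = 9 * T.sum id := by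
    rw [Multiset.sum_nsmul, sum_val, smul_eq_mul]
  have memcond : ∀ P : n.Partition,
      (T ∈ (P.parts.toFinset.filter fun s => 9 ≤ P.parts.count s).powerset)
      ↔ ∀ s ∈ T, 9 ≤ P.parts.count s := by
    intro P
    rw [Finset.mem_powerset]
    constructor
    · intro h s hs; exact (Finset.mem_filter.mp (h hs)).2
    · intro h s hs
      refine Finset.mem_filter.mpr ⟨Multiset.mem_toFinset.mpr ?_, h s hs⟩
      rw [← Multiset.count_pos]
      have := h s hs; omega
  refine Finset.sum_bij (i := fun P hP => ⟨P.parts - 9 • T.val, ?_, ?_⟩) ?_ ?_ ?_ ?_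
  · intro i hi
    exact P.parts_pos (Multiset.mem_of_le (tsub_le_self) hi)
  · have hcond : ∀ s ∈ T, 9 ≤ P.parts.count s := by
      rw [← memcond]
      exact (Finset.mem_filter.mp hP).2
    have hle := nsmul_le P T hcond
    obtain ⟨u, hu⟩ := Multiset.le_iff_exists_add.mp hle
    rw [hu, add_tsub_cancel_left]
    have hsum : (9 • T.val).sum + u.sum = n := by
      rw [← Multiset.sum_add, ← hu, P.parts_sum]
    rw [hRsum] at hsum
    omega
  · intro P hP
    exact Finset.mem_univ _
  · intro P1 hP1 P2 hP2 heq
    have hle1 := nsmul_le P1 T ((memcond P1).mp (Finset.mem_filter.mp hP1).2)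
    have hle2 := nsmul_le P2 T ((memcond P2).mp (Finset.mem_filter.mp hP2).2)
    have hparts : P1.parts - 9 • T.val = P2.parts - 9 • T.val := congrArg Nat.Partition.parts heq
    apply Nat.Partition.ext
    rw [← tsub_add_cancel_of_le hle1, ← tsub_add_cancel_of_le hle2, hparts]
  · intro Q _
    have hposP : ∀ {i : ℕ}, i ∈ Q.parts + 9 • T.val → 0 < i := by
      intro i hi
      rcases Multiset.mem_add.mp hi with h1 | h1
      · exact Q.parts_pos h1
      · have : i ∈ T.val := by
          have := Multiset.mem_nsmul.mp h1
          exact this.2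
        exact hTpos i this
    have hsumP : (Q.parts + 9 • T.val).sum = n := by
      rw [Multiset.sum_add, Q.parts_sum, hRsum]
      omega
    refine ⟨⟨Q.parts + 9 • T.val, hposP, hsumP⟩, ?_, ?_⟩
    · rw [Finset.mem_filter]
      refine ⟨Finset.mem_univ _, (memcond _).mpr ?_⟩
      intro s hs
      simp only [Multiset.count_add, Multiset.count_nsmul, count_finset_val, if_pos hs]
      omega
    · apply Nat.Partition.ext
      simp only
      rw [add_tsub_cancel_right]
  · intro P hP
    have hcnt : ∀ a, (P.parts - 9 • T.val).count a
        = P.parts.count a - (if a ∈ T then 9 else 0) := by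
      intro a
      rw [Multiset.count_sub, Multiset.count_nsmul, count_finset_val]
      by_cases ha : a ∈ T
      · rw [if_pos ha, if_pos ha, mul_one]
      · rw [if_neg ha, if_neg ha, mul_zero]
    have hsub : (P.parts - 9 • T.val).toFinset ⊆ P.parts.toFinset := by
      intro a ha
      rw [Multiset.mem_toFinset] at ha ⊢
      exact Multiset.mem_of_le (tsub_le_self) ha
    rw [show ∏ s ∈ P.parts.toFinset, (wc (P.parts.count s - if s ∈ T then 9 else 0) : ℤ)
        = ∏ s ∈ P.parts.toFinset, (wc ((P.parts - 9 • T.val).count s) : ℤ) from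
      Finset.prod_congr rfl (fun s _ => by rw [hcnt])]
    symm
    apply Finset.prod_subset hsub
    intro a haP haQ
    have : (P.parts - 9 • T.val).count a = 0 := by
      rw [Multiset.count_eq_zero]
      intro hc
      exact haQ (Multiset.mem_toFinset.mpr hc)
      
    rw [this, wc_zero, Nat.cast_one]

theorem key_expand (n : ℕ) : (ckj 9 8 n : ℤ)
    = ∑ S ∈ (Finset.Icc 1 n).powerset.filter (fun S => 9 * S.sum id ≤ n),
        (-1:ℤ)^S.card * (ckj 9 9 (n - 9 * S.sum id) : ℤ) := by
  have hLHS : (ckj 9 8 n : ℤ)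
      = ∑ P : n.Partition, ∑ T ∈ (P.parts.toFinset.filter
          (fun s => 9 ≤ P.parts.count s)).powerset,
          (-1:ℤ)^T.card *
            ∏ s ∈ P.parts.toFinset, (wc (P.parts.count s - if s ∈ T then 9 else 0) : ℤ) := by
    rw [ckj, Nat.cast_sum]
    exact Finset.sum_congr rfl (fun P _ => expand_one P)
  rw [hLHS]
  set pentD := (Finset.Icc 1 n).powerset.filter (fun S => 9 * S.sum id ≤ n) with hpentD
  have hext : ∀ P : n.Partition,
      (P.parts.toFinset.filter (fun s => 9 ≤ P.parts.count s)).powerset ⊆ pentD := by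
    intro P T hT
    rw [Finset.mem_powerset] at hT
    have hcond : ∀ s ∈ T, 9 ≤ P.parts.count s := fun s hs => (Finset.mem_filter.mp (hT hs)).2
    rw [hpentD, Finset.mem_filter, Finset.mem_powerset]
    constructor
    · intro s hs
      have h2 := Finset.mem_filter.mp (hT hs)
      have hmem : s ∈ P.parts := Multiset.mem_toFinset.mp h2.1
      simp only [Finset.mem_Icc]
      refine ⟨P.parts_pos hmem, ?_⟩
      have := Multiset.le_sum_of_mem hmem
      rwa [P.parts_sum] at this
    · have hle := nsmul_le P T hcond
      obtain ⟨u, hu⟩ := Multiset.le_iff_exists_add.mp hle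
      have hsum : (9 • T.val).sum + u.sum = n := by
        rw [← Multiset.sum_add, ← hu, P.parts_sum]
      have hRsum : (9 • T.val).sum = 9 * T.sum id := by
        rw [Multiset.sum_nsmul, sum_val, smul_eq_mul]
      omega
  have step1 : ∀ P : n.Partition,
      (∑ T ∈ (P.parts.toFinset.filter (fun s => 9 ≤ P.parts.count s)).powerset,
        (-1:ℤ)^T.card *
          ∏ s ∈ P.parts.toFinset, (wc (P.parts.count s - if s ∈ T then 9 else 0) : ℤ))
      = ∑ T ∈ pentD, if T ∈ (P.parts.toFinset.filter (fun s => 9 ≤ P.parts.count s)).powerset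
          then (-1:ℤ)^T.card *
            ∏ s ∈ P.parts.toFinset, (wc (P.parts.count s - if s ∈ T then 9 else 0) : ℤ)
          else 0 := by
    intro P
    rw [Finset.sum_ite_mem, Finset.inter_eq_right.mpr (hext P)]
  rw [Finset.sum_congr rfl (fun P _ => step1 P), Finset.sum_comm]
  apply Finset.sum_congr rfl
  intro T hT
  have hT' := hT
  rw [hpentD, Finset.mem_filter, Finset.mem_powerset] at hT'
  obtain ⟨hTsub, hTn⟩ := hT'
  have hTpos : ∀ s ∈ T, 0 < s := by
    intro s hs
    have := hTsub hs
    simp only [Finset.mem_Icc] at this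
    omega
  rw [← Finset.sum_filter]
  rw [← Finset.mul_sum]
  congr 1
  rw [sliceSum T hTn hTpos, ckj99_eq, Nat.cast_sum]
  apply Finset.sum_congr rfl
  intro Q _
  rw [Nat.cast_prod]

lemma pentSign_ext {b n : ℕ} (h : b ≤ n) :
    pentSign b = ∑ t ∈ Finset.Icc (-(n:ℤ)) (n:ℤ),
      if t * (3*t - 1) / 2 = (b:ℤ) then (-1:ℤ)^t.natAbs else 0 := by
  rw [pentSign]
  apply Finset.sum_subset
  · apply Finset.Icc_subset_Icc
    · simp only [neg_le_neg_iff, Nat.cast_le]; exact h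
    · exact_mod_cast h
  · intro t ht htn
    rw [if_neg]
    intro hgt
    apply htn
    have habs := pent_ge_abs t
    rw [hgt] at habs
    simp only [Finset.mem_Icc] at ht ⊢
    omega

lemma fiber_eval (n b : ℕ) (hb : b ≤ n) :
    ∑ S ∈ ((Finset.Icc 1 n).powerset.filter (fun S => 9 * S.sum id ≤ n)).filter
        (fun S => S.sum id = b),
      (-1:ℤ)^S.card * (ckj 9 9 (n - 9 * S.sum id) : ℤ)
    = if 9 * b ≤ n then pentSign b * (ckj 9 9 (n - 9*b) : ℤ) else 0 := by
  by_cases h9 : 9*b ≤ n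
  · rw [if_pos h9]
    have hset : ((Finset.Icc 1 n).powerset.filter (fun S => 9 * S.sum id ≤ n)).filter
        (fun S => S.sum id = b) = (Finset.Icc 1 n).powerset.filter (fun S => S.sum id = b) := by
      ext S
      simp only [Finset.mem_filter, Finset.mem_powerset]
      constructor
      · rintro ⟨⟨h1, _⟩, h3⟩; exact ⟨h1, h3⟩
      · rintro ⟨h1, h2⟩; exact ⟨⟨h1, by rw [h2]; exact h9⟩, h2⟩
    rw [hset, ← pentagonal_sum n b hb, Finset.sum_mul]
    apply Finset.sum_congr rfl
    intro S hS
    rw [(Finset.mem_filter.mp hS).2]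
  · rw [if_neg h9]
    have hempty : ((Finset.Icc 1 n).powerset.filter (fun S => 9 * S.sum id ≤ n)).filter
        (fun S => S.sum id = b) = ∅ := by
      rw [Finset.eq_empty_iff_forall_notMem]
      intro S hS
      simp only [Finset.mem_filter] at hS
      exact h9 (hS.2 ▸ hS.1.2)
    rw [hempty, Finset.sum_empty]

lemma final_swap (n : ℕ) :
    (∑ b ∈ Finset.range (n+1),
      if 9 * b ≤ n then pentSign b * (ckj 9 9 (n - 9*b) : ℤ) else 0)
    = ∑ t ∈ Finset.Icc (-(n:ℤ)) (n:ℤ),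
        if 9 * (t * (3 * t - 1) / 2) ≤ (n:ℤ) then
          (-1)^t.natAbs * (ckj 9 9 ((n:ℤ) - 9 * (t * (3 * t - 1) / 2)).toNat : ℤ)
        else 0 := by
  have step1 : (∑ b ∈ Finset.range (n+1),
      if 9 * b ≤ n then pentSign b * (ckj 9 9 (n - 9*b) : ℤ) else 0)
      = ∑ b ∈ Finset.range (n+1), ∑ t ∈ Finset.Icc (-(n:ℤ)) (n:ℤ),
          (if 9 * b ≤ n then
            (if t * (3*t - 1) / 2 = (b:ℤ) then (-1:ℤ)^t.natAbs else 0)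
              * (ckj 9 9 (n - 9*b) : ℤ)
          else 0) := by
    apply Finset.sum_congr rfl
    intro b hb
    rw [Finset.mem_range] at hb
    by_cases h9 : 9*b ≤ n
    · rw [if_pos h9, pentSign_ext (by omega : b ≤ n), Finset.sum_mul]
      apply Finset.sum_congr rfl
      intro t _
      rw [if_pos h9]
    · rw [if_neg h9]
      symm
      apply Finset.sum_eq_zero
      intro t _
      rw [if_neg h9]
  rw [step1, Finset.sum_comm]
  apply Finset.sum_congr rfl
  intro t ht
  simp only [Finset.mem_Icc] at ht
  have habs := pent_ge_abs t
  have hgnn : (0:ℤ) ≤ t * (3*t-1)/2 := le_trans (by positivity) habs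
  by_cases hgn : 9 * (t * (3*t-1)/2) ≤ (n:ℤ)
  · rw [if_pos hgn]
    have hb0 : (((t * (3*t-1)/2).toNat : ℤ)) = t * (3*t-1)/2 := Int.toNat_of_nonneg hgnn
    rw [Finset.sum_eq_single_of_mem ((t * (3*t-1)/2).toNat)
        (Finset.mem_range.mpr (by omega))]
    · rw [if_pos (by omega : 9 * (t * (3*t-1)/2).toNat ≤ n), if_pos hb0.symm]
      have hcast : n - 9 * (t * (3*t-1)/2).toNat = ((n:ℤ) - 9 * (t * (3*t-1)/2)).toNat := by
        omega
      rw [hcast]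
    · intro b hb hne
      by_cases h9b : 9*b ≤ n
      · rw [if_pos h9b, if_neg, zero_mul]
        intro hc
        apply hne
        omega
      · rw [if_neg h9b]
  · rw [if_neg hgn]
    apply Finset.sum_eq_zero
    intro b _
    by_cases h9b : 9*b ≤ n
    · rw [if_pos h9b, if_neg, zero_mul]
      intro hc
      apply hgn
      omega
    · rw [if_neg h9b]


/-- The pentagonal-number recurrence, magnified by 9, linking `c₉,₈` and `c₉,₉`:
`c₉,₈(n) = Σ_{t ∈ ℤ} (-1)^t c₉,₉(n - 9·t(3t-1)/2)`, the sum running over all integers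
`t` with `9·t(3t-1)/2 ≤ n` (all such `t` satisfy `|t| ≤ n`). -/
theorem c98_pentagonal_recurrence (n : ℕ) :
    (ckj 9 8 n : ℤ) =
      ∑ t ∈ Finset.Icc (-(n : ℤ)) (n : ℤ),
        if 9 * (t * (3 * t - 1) / 2) ≤ (n : ℤ) then
          (-1) ^ t.natAbs * (ckj 9 9 ((n : ℤ) - 9 * (t * (3 * t - 1) / 2)).toNat : ℤ)
        else 0 := by
  rw [key_expand]
  rw [← Finset.sum_fiberwise_of_maps_to (g := fun S => S.sum id) (t := Finset.range (n+1))
      (fun S hS => Finset.mem_range.mpr (by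
        have h2 : 9 * S.sum id ≤ n := (Finset.mem_filter.mp hS).2
        show S.sum id < n + 1
        omega))]
  rw [Finset.sum_congr rfl (fun b hb => fiber_eval n b (by
    have := Finset.mem_range.mp hb
    omega))]
  exact final_swap n
end

section
/- Define P(e) = Σ_{i=1}^{5} C(9,i)·C(e−1, i−1) for a positive integer e (so P(e) = (3/4)(76 − 162e + 133e² − 42e³ + 7e⁴)). Then P(e) ≡ 9 (mod 27) whenever e ≡ 1 (mod 3), and P(e) ≡ 18 (mod 27) whenever e ≡ 2 (mod 3). Consequently, if N ≡ 2 (mod 3) then Σ_{e | N} P(e) ≡ 0 (mod 27). -/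
/-- `P(e) = Σ_{i=1}^{5} C(9,i)·C(e−1, i−1)`, the number of ways to color `e` parts of a
single size using at most 5 of 9 colors. -/
def P95 (e : ℕ) : ℕ :=
  ∑ i ∈ Finset.Icc 1 5, Nat.choose 9 i * Nat.choose (e - 1) (i - 1)

lemma P95_succ (m : ℕ) :
    P95 (m+1) = 9 + 36*m + 84*m.choose 2 + 126*m.choose 3 + 126*m.choose 4 := by
  unfold P95
  rw [show Finset.Icc 1 5 = {1,2,3,4,5} by decide]
  simp [Finset.sum_insert, Nat.choose]
  ring

lemma choose_add_nine (m k : ℕ) :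
    (m + 9).choose k = ∑ ij ∈ Finset.HasAntidiagonal.antidiagonal k, m.choose ij.1 * Nat.choose 9 ij.2 :=
  Nat.add_choose_eq m 9 k

lemma P95_period (m : ℕ) : P95 (m + 10) ≡ P95 (m + 1) [MOD 27] := by
  have h2 := choose_add_nine m 2
  have h3 := choose_add_nine m 3
  have h4 := choose_add_nine m 4
  simp only [Finset.Nat.sum_antidiagonal_eq_sum_range_succ_mk, Finset.sum_range_succ,
    Finset.sum_range_zero, Nat.choose_zero_right, Nat.choose_one_right, Nat.choose_self]
    at h2 h3 h4
  norm_num [show Nat.choose 9 2 = 36 from rfl, show Nat.choose 9 3 = 84 from rfl,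
    show Nat.choose 9 4 = 126 from rfl] at h2 h3 h4
  have e1 : P95 (m + 10) = P95 ((m+9) + 1) := by ring_nf
  rw [e1, P95_succ, P95_succ]
  unfold Nat.ModEq
  omega

lemma P95_reduce : ∀ m : ℕ, P95 (m + 1) ≡ P95 (m % 9 + 1) [MOD 27] := by
  intro m
  induction m using Nat.strong_induction_on with
  | _ m ih =>
    rcases lt_or_ge m 9 with h | h
    · rw [Nat.mod_eq_of_lt h]
    · obtain ⟨k, rfl⟩ : ∃ k, m = k + 9 := ⟨m - 9, by omega⟩
      have h1 : P95 (k + 9 + 1) ≡ P95 (k + 1) [MOD 27] := by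
        have := P95_period k; rwa [show k + 10 = k + 9 + 1 from rfl] at this
      have h2 := ih k (by omega)
      rw [show (k + 9) % 9 = k % 9 by omega]
      exact h1.trans h2

lemma sum_modEq {α : Type*} {s : Finset α} {f g : α → ℕ} {n : ℕ}
    (h : ∀ i ∈ s, f i ≡ g i [MOD n]) : (∑ i ∈ s, f i) ≡ (∑ i ∈ s, g i) [MOD n] := by
  classical
  induction s using Finset.cons_induction with
  | empty => rfl
  | cons a s ha ih =>
    rw [Finset.sum_cons, Finset.sum_cons]
    exact (h a (Finset.mem_cons_self a s)).add (ih fun i hi => h i (Finset.mem_cons_of_mem hi))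

lemma P95_one_mod (e : ℕ) (he : 1 ≤ e) (h3 : e % 3 = 1) : P95 e ≡ 9 [MOD 27] := by
  obtain ⟨m, rfl⟩ : ∃ m, e = m + 1 := ⟨e - 1, by omega⟩
  refine (P95_reduce m).trans ?_
  have : m % 9 = 0 ∨ m % 9 = 3 ∨ m % 9 = 6 := by omega
  rcases this with h | h | h <;> rw [h] <;> decide

lemma P95_two_mod (e : ℕ) (he : 1 ≤ e) (h3 : e % 3 = 2) : P95 e ≡ 18 [MOD 27] := by
  obtain ⟨m, rfl⟩ : ∃ m, e = m + 1 := ⟨e - 1, by omega⟩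
  refine (P95_reduce m).trans ?_
  have : m % 9 = 1 ∨ m % 9 = 4 ∨ m % 9 = 7 := by omega
  rcases this with h | h | h <;> rw [h] <;> decide

lemma divisor_mod3 {N e : ℕ} (hN : N % 3 = 2) (he : e ∈ N.divisors) : e % 3 ≠ 0 := by
  intro h0
  obtain ⟨hd, hN0⟩ := Nat.mem_divisors.mp he
  have : (3 : ℕ) ∣ e := Nat.dvd_of_mod_eq_zero h0
  have : (3 : ℕ) ∣ N := this.trans hd
  omega

lemma compl_mod {N e : ℕ} (hN0 : N ≠ 0) (hN : N % 3 = 2) (hd : e ∣ N) (hc : e ∣ N) :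
    (e % 3) * ((N / e) % 3) % 3 = 2 := by
  have h1 : e * (N / e) = N := Nat.mul_div_cancel' hd
  have := Nat.mul_mod e (N / e) 3
  omega

lemma card_eq (N : ℕ) (hN0 : 0 < N) (hN : N % 3 = 2) :
    (N.divisors.filter (fun e => e % 3 = 1)).card
      = (N.divisors.filter (fun e => e % 3 = 2)).card := by
  apply Finset.card_bij' (fun e _ => N / e) (fun e _ => N / e)
  · intro e he
    simp only [Finset.mem_filter] at he ⊢
    obtain ⟨hmem, h1⟩ := he
    obtain ⟨hd, hN0'⟩ := Nat.mem_divisors.mp hmem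
    have hmem' : N / e ∈ N.divisors := Nat.mem_divisors.mpr ⟨Nat.div_dvd_of_dvd hd, hN0'⟩
    refine ⟨hmem', ?_⟩
    have := compl_mod hN0' hN hd hd
    have h3 := divisor_mod3 hN hmem'
    rw [h1] at this
    omega
  · intro e he
    simp only [Finset.mem_filter] at he ⊢
    obtain ⟨hmem, h2⟩ := he
    obtain ⟨hd, hN0'⟩ := Nat.mem_divisors.mp hmem
    have hmem' : N / e ∈ N.divisors := Nat.mem_divisors.mpr ⟨Nat.div_dvd_of_dvd hd, hN0'⟩
    refine ⟨hmem', ?_⟩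
    have := compl_mod hN0' hN hd hd
    have h3 := divisor_mod3 hN hmem'
    rw [h2] at this
    omega
  · intro e he
    simp only [Finset.mem_filter] at he
    exact Nat.div_div_self (Nat.mem_divisors.mp he.1).1 (Nat.mem_divisors.mp he.1).2
  · intro e he
    simp only [Finset.mem_filter] at he
    exact Nat.div_div_self (Nat.mem_divisors.mp he.1).1 (Nat.mem_divisors.mp he.1).2

theorem P95_mod_27 :
    (∀ e : ℕ, 1 ≤ e → e % 3 = 1 → P95 e ≡ 9 [MOD 27]) ∧
    (∀ e : ℕ, 1 ≤ e → e % 3 = 2 → P95 e ≡ 18 [MOD 27]) ∧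
    (∀ N : ℕ, 0 < N → N % 3 = 2 → (∑ e ∈ N.divisors, P95 e) ≡ 0 [MOD 27]) := by
  refine ⟨P95_one_mod, P95_two_mod, ?_⟩
  intro N hN0 hN
  have step1 : (∑ e ∈ N.divisors, P95 e)
      ≡ (∑ e ∈ N.divisors, if e % 3 = 1 then 9 else 18) [MOD 27] := by
    apply sum_modEq
    intro e he
    have h1 : 1 ≤ e := (Nat.pos_of_mem_divisors he)
    have h3 := divisor_mod3 hN he
    by_cases h : e % 3 = 1
    · rw [if_pos h]; exact P95_one_mod e h1 h
    · rw [if_neg h]; exact P95_two_mod e h1 (by omega)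
  refine step1.trans ?_
  rw [Finset.sum_ite, Finset.sum_const, Finset.sum_const]
  have hfilter : N.divisors.filter (fun e => ¬ e % 3 = 1)
      = N.divisors.filter (fun e => e % 3 = 2) := by
    apply Finset.filter_congr
    intro e he
    have := divisor_mod3 hN he
    constructor <;> intro h <;> omega
  rw [hfilter, ← card_eq N hN0 hN]
  simp only [smul_eq_mul]
  have : (N.divisors.filter (fun e => e % 3 = 1)).card * 9
      + (N.divisors.filter (fun e => e % 3 = 1)).card * 18
      = 27 * (N.divisors.filter (fun e => e % 3 = 1)).card := by ring
  rw [this]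
  exact (Nat.modEq_zero_iff_dvd).mpr ⟨_, rfl⟩
end

section
/- For every integer n ≥ 1, the number of (k,j)-colored partitions of n equals the coefficient of q^n in (1/(q;q)_∞^j) · Π_{m≥1} ( Σ_{i=0}^{j} C(k−j+i−1, i) q^{i m} ); that is, Π_{m≥1} ( Σ_{i=0}^{j} C(k,i) q^{i m} / (1−q^m)^i ) = (1/(q;q)_∞^j) · Π_{m≥1} ( Σ_{i=0}^{j} C(k−j+i−1, i) q^{i m} ). -/
open PowerSeries

open Finset
open scoped Classical

noncomputable section CkjAux

lemma ckj_const (m : ℕ) (hm : 1 ≤ m) : constantCoeff (R := ℚ) (1 - X ^ m : ℚ⟦X⟧) ≠ 0 := by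
  rw [map_sub, map_one, map_pow, constantCoeff_X, zero_pow (by omega : m ≠ 0)]
  norm_num

lemma ckj_not_dvd_sub {m d : ℕ} (h1 : ¬ m ∣ d) (hle : m ≤ d) : ¬ m ∣ d - m := by
  intro hdvd
  exact h1 (by have := Nat.dvd_add hdvd (dvd_refl m); rwa [Nat.sub_add_cancel hle] at this)

lemma ckj_geom (m : ℕ) (hm : 1 ≤ m) :
    ((1 - X ^ m : ℚ⟦X⟧))⁻¹ = PowerSeries.mk fun d => if m ∣ d then (1 : ℚ) else 0 := by
  rw [PowerSeries.inv_eq_iff_mul_eq_one (ckj_const m hm)]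
  ext d
  rw [mul_sub, mul_one, map_sub, PowerSeries.coeff_mul_X_pow', PowerSeries.coeff_one]
  simp only [PowerSeries.coeff_mk]
  rcases eq_or_ne d 0 with rfl | hd
  · rw [if_pos (dvd_zero m), if_neg (by omega : ¬ m ≤ 0), if_pos rfl]; ring
  · rw [if_neg hd]
    by_cases h1 : m ∣ d
    · have hle : m ≤ d := Nat.le_of_dvd (Nat.pos_of_ne_zero hd) h1
      rw [if_pos h1, if_pos hle, if_pos (Nat.dvd_sub h1 dvd_rfl)]
      ring
    · rw [if_neg h1]
      split_ifs with hle h2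
      · exact absurd h2 (ckj_not_dvd_sub h1 hle)
      · ring
      · ring

lemma ckj_Epow (m i : ℕ) (hm : 1 ≤ m) :
    ((1 - X ^ m : ℚ⟦X⟧))⁻¹ ^ (i + 1) =
      PowerSeries.mk fun d => if m ∣ d then ((d / m + i).choose i : ℚ) else 0 := by
  induction i with
  | zero => simpa using ckj_geom m hm
  | succ i ih =>
    have step : (1 - X ^ m : ℚ⟦X⟧) *
        (PowerSeries.mk fun d => if m ∣ d then ((d / m + (i+1)).choose (i+1) : ℚ) else 0) =
        PowerSeries.mk fun d => if m ∣ d then ((d / m + i).choose i : ℚ) else 0 := by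
      ext d
      rw [sub_mul, one_mul, map_sub, PowerSeries.coeff_X_pow_mul']
      simp only [PowerSeries.coeff_mk]
      by_cases h1 : m ∣ d
      · rcases eq_or_ne d 0 with rfl | hd
        · rw [if_neg (by omega : ¬ m ≤ 0)]
          simp
        · have hle : m ≤ d := Nat.le_of_dvd (Nat.pos_of_ne_zero hd) h1
          rw [if_pos h1, if_pos h1, if_pos hle, if_pos (Nat.dvd_sub h1 dvd_rfl)]
          obtain ⟨t, rfl⟩ := h1
          have ht : t ≠ 0 := by rintro rfl; simp at hd
          obtain ⟨s, rfl⟩ := Nat.exists_eq_succ_of_ne_zero ht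
          have hd1 : m * (s + 1) / m = s + 1 := Nat.mul_div_cancel_left _ (by omega)
          have hd2 : (m * (s + 1) - m) / m = s := by
            rw [show m * (s + 1) - m = m * s by rw [Nat.mul_succ]; omega,
              Nat.mul_div_cancel_left _ (by omega : 0 < m)]
          rw [hd1, hd2]
          have key : (s + 1 + (i + 1)).choose (i + 1)
              = (s + (i + 1)).choose i + (s + (i + 1)).choose (i + 1) := by
            rw [show s + 1 + (i + 1) = (s + (i + 1)) + 1 from by omega]
            exact Nat.choose_succ_succ _ _
          rw [key, show s + (i + 1) = s + 1 + i from by omega]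
          push_cast
          ring
      · rw [if_neg h1, if_neg h1]
        split_ifs with hle h2
        · exact absurd h2 (ckj_not_dvd_sub h1 hle)
        · ring
        · ring
    calc ((1 - X ^ m : ℚ⟦X⟧))⁻¹ ^ (i + 1 + 1)
        = ((1 - X ^ m : ℚ⟦X⟧))⁻¹ * ((1 - X ^ m : ℚ⟦X⟧))⁻¹ ^ (i + 1) := by ring
      _ = ((1 - X ^ m : ℚ⟦X⟧))⁻¹ * ((1 - X ^ m) *
            (PowerSeries.mk fun d => if m ∣ d then ((d / m + (i+1)).choose (i+1) : ℚ) else 0)) := by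
          rw [ih, step]
      _ = _ := by
          rw [← mul_assoc, PowerSeries.inv_mul_cancel _ (ckj_const m hm), one_mul]

/-- weight of a part size with multiplicity `c`. -/
def ggw (k j c : ℕ) : ℚ :=
  if c = 0 then 1 else ∑ i ∈ Finset.Icc 1 j, (k.choose i : ℚ) * (((c - 1).choose (i - 1) : ℕ) : ℚ)

lemma ckj_term (m i d : ℕ) (hm : 1 ≤ m) (hi : 1 ≤ i) :
    coeff (R := ℚ) d ((X : ℚ⟦X⟧) ^ (i * m) * ((1 - X ^ m)⁻¹) ^ i) =
      if m ∣ d ∧ d ≠ 0 then ((d / m - 1).choose (i - 1) : ℚ) else 0 := by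
  obtain ⟨i, rfl⟩ : ∃ n, i = n + 1 := ⟨i - 1, by omega⟩
  rw [ckj_Epow m i hm, PowerSeries.coeff_X_pow_mul']
  simp only [PowerSeries.coeff_mk, Nat.add_sub_cancel]
  split_ifs with h2 h3 h4 h4 h5
  · -- ≤, dvd sub, RHS true
    congr 2
    obtain ⟨t, rfl⟩ := h4.1
    have hit : i + 1 ≤ t := by
      by_contra hc
      push_neg at hc
      have h3' : m * t ≤ m * i := Nat.mul_le_mul_left m (by omega)
      have h4' : (i + 1) * m = m * i + m := by ring
      omega
    rw [show m * t - (i + 1) * m = m * (t - (i + 1)) by rw [Nat.mul_sub]; ring_nf,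
      Nat.mul_div_cancel_left _ (by omega : 0 < m), Nat.mul_div_cancel_left _ (by omega : 0 < m)]
    omega
  · -- ≤, dvd sub, RHS false : contradiction
    exfalso
    apply h4
    constructor
    · have := Nat.dvd_add h3 (Dvd.intro_left (i+1) rfl)
      rwa [Nat.sub_add_cancel h2] at this
    · have : 0 < (i + 1) * m := Nat.mul_pos (by omega) (by omega)
      omega
  · -- ≤, ¬dvd sub, RHS true : contradiction
    exact absurd (Nat.dvd_sub h4.1 (Dvd.intro_left (i+1) rfl)) h3
  · rfl
  · -- ¬ ≤, RHS true: choose = 0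
    obtain ⟨t, rfl⟩ := h5.1
    have ht : t ≠ 0 := by rintro rfl; simp at h5
    have : t < i + 1 := by
      by_contra h
      exact h2 (by push_neg at h; calc (i+1)*m = m*(i+1) := by ring
                  _ ≤ m * t := Nat.mul_le_mul_left m (by omega))
    rw [Nat.mul_div_cancel_left _ (by omega : 0 < m), Nat.choose_eq_zero_of_lt (by omega),
      Nat.cast_zero]
  · rfl

lemma ckj_factor (k j m : ℕ) (hm : 1 ≤ m) :
    (∑ i ∈ Finset.range (j + 1),
        (k.choose i : ℚ) • ((X : ℚ⟦X⟧) ^ (i * m) * ((1 - X ^ m)⁻¹) ^ i)) =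
      PowerSeries.mk fun d => if m ∣ d then ggw k j (d / m) else 0 := by
  ext d
  rw [map_sum]
  simp only [LinearMap.map_smul, smul_eq_mul, PowerSeries.coeff_mk]
  have hsplit : Finset.range (j + 1) = insert 0 (Finset.Icc 1 j) := by
    ext x; simp; omega
  rw [hsplit, Finset.sum_insert (by simp)]
  simp only [Nat.choose_zero_right, Nat.cast_one, one_mul, zero_mul, pow_zero, mul_one,
    PowerSeries.coeff_one]
  have hterms : ∀ i ∈ Finset.Icc 1 j,
      (k.choose i : ℚ) * coeff (R := ℚ) d ((X : ℚ⟦X⟧) ^ (i * m) * ((1 - X ^ m)⁻¹) ^ i) =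
        (k.choose i : ℚ) * (if m ∣ d ∧ d ≠ 0 then (((d / m - 1).choose (i - 1) : ℕ) : ℚ) else 0) :=
    fun i hi => by rw [ckj_term m i d hm (Finset.mem_Icc.mp hi).1]
  rw [Finset.sum_congr rfl hterms]
  by_cases h1 : m ∣ d
  · rcases eq_or_ne d 0 with rfl | hd
    · simp [ggw]
    · rw [if_neg hd, if_pos h1, zero_add, ggw,
        if_neg (by have := Nat.one_le_div_iff (show 0 < m by omega) |>.2
                      (Nat.le_of_dvd (Nat.pos_of_ne_zero hd) h1); omega)]
      exact Finset.sum_congr rfl (fun i hi => by rw [if_pos ⟨h1, hd⟩])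
  · rw [if_neg h1]
    have hd : d ≠ 0 := by rintro rfl; exact h1 (dvd_zero m)
    rw [if_neg hd, zero_add]
    exact Finset.sum_eq_zero fun i hi => by rw [if_neg (fun hc => h1 hc.1), mul_zero]

/-- The finsupp of dilated multiplicities attached to a partition. -/
def ckj_phi {n : ℕ} (p : n.Partition) : ℕ →₀ ℕ where
  support := p.parts.toFinset
  toFun := fun m => p.parts.count m * m
  mem_support_toFun := by
    intro a
    simp only [Multiset.mem_toFinset, ne_eq, Nat.mul_eq_zero, not_or, Multiset.count_eq_zero]
    constructor
    · intro h
      exact ⟨by simpa using h, by have := p.parts_pos h; omega⟩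
    · intro h
      simpa using h.1

lemma ckj_weighted (n : ℕ) (w : ℕ → ℚ) (hw : w 0 = 1) :
    coeff (R := ℚ) n (∏ m ∈ Finset.Icc 1 n, PowerSeries.mk fun d => if m ∣ d then w (d / m) else 0) =
      ∑ P : n.Partition, ∏ s ∈ P.parts.toFinset, w (P.parts.count s) := by
  rw [PowerSeries.coeff_prod]
  simp only [PowerSeries.coeff_mk]
  have hfil : ∀ l ∈ finsuppAntidiag (Finset.Icc 1 n) n,
      (∏ m ∈ Finset.Icc 1 n, if m ∣ l m then w (l m / m) else 0) ≠ 0 →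
        ∀ m ∈ Finset.Icc 1 n, m ∣ l m := by
    intro l hl hne m hm
    by_contra hc
    exact hne (Finset.prod_eq_zero hm (if_neg hc))
  rw [← Finset.sum_filter_of_ne hfil]
  refine (Finset.sum_bij (fun (p : n.Partition) (_ : p ∈ Finset.univ) => ckj_phi p)
    ?_ ?_ ?_ ?_).symm
  · -- membership
    intro p _
    have hsub : p.parts.toFinset ⊆ Finset.Icc 1 n := by
      intro m hm
      rw [Multiset.mem_toFinset] at hm
      refine Finset.mem_Icc.mpr ⟨p.parts_pos hm, ?_⟩
      calc m ≤ p.parts.sum := Multiset.single_le_sum (fun x _ => Nat.zero_le x) m hm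
        _ = n := p.parts_sum
    rw [Finset.mem_filter, mem_finsuppAntidiag]
    refine ⟨⟨?_, hsub⟩, fun m _ => Dvd.intro_left _ rfl⟩
    have h2 := Finset.sum_multiset_count_of_subset p.parts (Finset.Icc 1 n) hsub
    rw [p.parts_sum] at h2
    show (∑ m ∈ Finset.Icc 1 n, p.parts.count m * m) = n
    calc (∑ m ∈ Finset.Icc 1 n, p.parts.count m * m)
        = ∑ m ∈ Finset.Icc 1 n, p.parts.count m • m := by simp
      _ = n := h2.symm
  · -- injectivity
    intro p₁ _ p₂ _ h
    apply Nat.Partition.ext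
    ext i
    have hi := congrArg (fun f => f i) (congrArg Finsupp.toFun h)
    simp only [ckj_phi, Finsupp.coe_mk] at hi
    rcases eq_or_ne i 0 with rfl | h0
    · rw [Multiset.count_eq_zero_of_notMem (fun hc => by have := p₁.parts_pos hc; omega),
        Multiset.count_eq_zero_of_notMem (fun hc => by have := p₂.parts_pos hc; omega)]
    · exact Nat.eq_of_mul_eq_mul_right (by omega) hi
  · -- surjectivity
    rintro l hl
    rw [Finset.mem_filter, mem_finsuppAntidiag] at hl
    obtain ⟨⟨hsum, hsupp⟩, hdvd⟩ := hl
    refine ⟨⟨∑ m ∈ Finset.Icc 1 n, Multiset.replicate (l m / m) m, ?_, ?_⟩, Finset.mem_univ _, ?_⟩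
    · intro i hi
      rw [Multiset.mem_sum] at hi
      obtain ⟨m, hm, hmem⟩ := hi
      rw [Multiset.eq_of_mem_replicate hmem]
      exact (Finset.mem_Icc.mp hm).1
    · rw [Multiset.sum_sum]
      simp only [Multiset.sum_replicate, smul_eq_mul]
      calc (∑ m ∈ Finset.Icc 1 n, l m / m * m)
          = ∑ m ∈ Finset.Icc 1 n, l m :=
            Finset.sum_congr rfl fun m hm => Nat.div_mul_cancel (hdvd m hm)
        _ = n := hsum
    · ext m
      simp only [ckj_phi, Finsupp.coe_mk]
      simp_rw [Multiset.count_sum', Multiset.count_replicate]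
      rw [Finset.sum_ite_eq' (Finset.Icc 1 n) m (fun m' => l m' / m')]
      split_ifs with h
      · exact Nat.div_mul_cancel (hdvd m h)
      · rw [zero_mul]
        exact (Finsupp.notMem_support_iff.mp (fun hc => h (hsupp hc))).symm
  · -- weights
    intro p _
    have hsub : p.parts.toFinset ⊆ Finset.Icc 1 n := by
      intro m hm
      rw [Multiset.mem_toFinset] at hm
      refine Finset.mem_Icc.mpr ⟨p.parts_pos hm, ?_⟩
      calc m ≤ p.parts.sum := Multiset.single_le_sum (fun x _ => Nat.zero_le x) m hm
        _ = n := p.parts_sum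
    have h1 : ∀ m ∈ Finset.Icc 1 n,
        (if m ∣ ckj_phi p m then w (ckj_phi p m / m) else 0) = w (p.parts.count m) := by
      intro m hm
      have hm1 : 0 < m := (Finset.mem_Icc.mp hm).1
      simp only [ckj_phi, Finsupp.coe_mk]
      simp only [if_pos (Dvd.intro_left _ rfl : m ∣ p.parts.count m * m), Nat.mul_div_cancel _ hm1]
    rw [Finset.prod_congr rfl h1]
    exact (Finset.prod_subset hsub fun m _ hm => by
      rw [Multiset.count_eq_zero_of_notMem (fun hc => hm (Multiset.mem_toFinset.mpr hc)), hw])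

lemma ckj_key_id {A : Type*} [CommRing A] (k j : ℕ) (hjk : j ≤ k) (x : A) :
    ∑ i ∈ Finset.range (j + 1), (k.choose i : A) * x ^ i * (1 - x) ^ (j - i) =
      ∑ i ∈ Finset.range (j + 1), ((k - j + i - 1).choose i : A) * x ^ i := by
  induction j with
  | zero => simp
  | succ j ih =>
    have hjk' : j ≤ k := by omega
    obtain ⟨a, rfl⟩ : ∃ a, k = a + (j + 1) := ⟨k - (j + 1), by omega⟩
    have hc1 : ∀ i, (a + (j + 1) - j + i - 1) = a + i := by intro i; omega
    have hc2 : ∀ i, (a + (j + 1) - (j + 1) + i - 1) = a + i - 1 := by intro i; omega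
    have lhs_step :
        ∑ i ∈ Finset.range (j + 1 + 1), ((a + (j + 1)).choose i : A) * x ^ i * (1 - x) ^ (j + 1 - i)
          = (1 - x) * ∑ i ∈ Finset.range (j + 1),
              ((a + (j + 1)).choose i : A) * x ^ i * (1 - x) ^ (j - i)
            + ((a + (j + 1)).choose (j + 1) : A) * x ^ (j + 1) := by
      rw [Finset.sum_range_succ, Finset.mul_sum]
      congr 1
      · apply Finset.sum_congr rfl
        intro i hi
        rw [Finset.mem_range] at hi
        rw [show j + 1 - i = (j - i) + 1 from by omega, pow_succ]
        ring
      · simp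
    rw [lhs_step, ih hjk']
    have expand : (1 - x) * (∑ i ∈ Finset.range (j + 1),
        ((a + (j + 1) - j + i - 1).choose i : A) * x ^ i)
        = ∑ i ∈ Finset.range (j + 1), ((a + i).choose i : A) * x ^ i
          - ∑ i ∈ Finset.range (j + 1), ((a + i).choose i : A) * x ^ (i + 1) := by
      simp_rw [hc1]
      rw [sub_mul, one_mul, Finset.mul_sum]
      congr 1
      apply Finset.sum_congr rfl
      intro i _
      ring
    rw [expand]
    simp_rw [hc2]
    have key : ∀ i : ℕ, ((a + i + 1).choose (i + 1) : A)
        = ((a + i).choose i : A) + ((a + i).choose (i + 1) : A) := by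
      intro i
      rw [Nat.choose_succ_succ (a + i) i]
      push_cast
      ring
    have hS : (∑ i ∈ Finset.range (j + 1), ((a + i).choose i : A) * x ^ i)
          + ((a + (j + 1)).choose (j + 1) : A) * x ^ (j + 1)
        = (∑ i ∈ Finset.range (j + 1),
            (((a + i).choose i : A) + ((a + i).choose (i + 1) : A)) * x ^ (i + 1)) + 1 := by
      calc (∑ i ∈ Finset.range (j + 1), ((a + i).choose i : A) * x ^ i)
            + ((a + (j + 1)).choose (j + 1) : A) * x ^ (j + 1)
          = ∑ i ∈ Finset.range (j + 1 + 1), ((a + i).choose i : A) * x ^ i :=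
            (Finset.sum_range_succ _ (j + 1)).symm
        _ = (∑ i ∈ Finset.range (j + 1), ((a + (i + 1)).choose (i + 1) : A) * x ^ (i + 1))
              + ((a + 0).choose 0 : A) * x ^ 0 := Finset.sum_range_succ' _ (j + 1)
        _ = _ := by
            rw [Finset.sum_congr rfl (fun i _ => by
              rw [show a + (i + 1) = a + i + 1 from by omega, key i])]
            simp
    have hT : (∑ i ∈ Finset.range (j + 1 + 1), ((a + i - 1).choose i : A) * x ^ i)
          + ∑ i ∈ Finset.range (j + 1), ((a + i).choose i : A) * x ^ (i + 1)
        = (∑ i ∈ Finset.range (j + 1),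
            (((a + i).choose i : A) + ((a + i).choose (i + 1) : A)) * x ^ (i + 1)) + 1 := by
      rw [Finset.sum_range_succ' (fun i => ((a + i - 1).choose i : A) * x ^ i) (j + 1)]
      have h1 : ∀ i ∈ Finset.range (j + 1),
          ((a + (i + 1) - 1).choose (i + 1) : A) * x ^ (i + 1)
            = ((a + i).choose (i + 1) : A) * x ^ (i + 1) := by
        intro i _
        rw [show a + (i + 1) - 1 = a + i from by omega]
      rw [Finset.sum_congr rfl h1]
      simp only [Nat.add_zero, pow_zero, mul_one]
      rw [add_right_comm, ← Finset.sum_add_distrib]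
      congr 1
      · apply Finset.sum_congr rfl
        intro i _
        ring
      · simp
    linear_combination hS - hT

lemma ckj_nat_smul (c : ℕ) (f : ℚ⟦X⟧) : (c : ℚ) • f = (c : ℚ⟦X⟧) * f := by
  rw [Nat.cast_smul_eq_nsmul, nsmul_eq_mul]

lemma ckj_factor_eq (k j m : ℕ) (hm : 1 ≤ m) (hjk : j ≤ k) :
    (∑ i ∈ Finset.range (j + 1),
        (k.choose i : ℚ) • ((X : ℚ⟦X⟧) ^ (i * m) * ((1 - X ^ m)⁻¹) ^ i)) =
      (((1 - X ^ m : ℚ⟦X⟧))⁻¹) ^ j *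
        ∑ i ∈ Finset.range (j + 1), ((k - j + i - 1).choose i : ℚ) • (X : ℚ⟦X⟧) ^ (i * m) := by
  set u : ℚ⟦X⟧ := 1 - X ^ m with hu
  have hinv : u⁻¹ * u = 1 := PowerSeries.inv_mul_cancel _ (ckj_const m hm)
  have hinv' : u * u⁻¹ = 1 := by rw [mul_comm]; exact hinv
  suffices h : u ^ j * (∑ i ∈ Finset.range (j + 1),
      (k.choose i : ℚ) • ((X : ℚ⟦X⟧) ^ (i * m) * (u⁻¹) ^ i)) =
      u ^ j * ((u⁻¹) ^ j *
        ∑ i ∈ Finset.range (j + 1), ((k - j + i - 1).choose i : ℚ) • (X : ℚ⟦X⟧) ^ (i * m)) by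
    have h2 := congrArg (fun z => (u⁻¹) ^ j * z) h
    simp only [← mul_assoc, ← mul_pow, hinv, one_pow, one_mul] at h2
    exact h2
  have hL : u ^ j * (∑ i ∈ Finset.range (j + 1),
      (k.choose i : ℚ) • ((X : ℚ⟦X⟧) ^ (i * m) * (u⁻¹) ^ i)) =
      ∑ i ∈ Finset.range (j + 1),
        (k.choose i : ℚ⟦X⟧) * ((X : ℚ⟦X⟧) ^ m) ^ i * (1 - (X : ℚ⟦X⟧) ^ m) ^ (j - i) := by
    rw [Finset.mul_sum]
    apply Finset.sum_congr rfl
    intro i hi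
    have hij : i ≤ j := by have := Finset.mem_range.mp hi; omega
    rw [ckj_nat_smul]
    calc u ^ j * ((k.choose i : ℚ⟦X⟧) * ((X : ℚ⟦X⟧) ^ (i * m) * (u⁻¹) ^ i))
        = (k.choose i : ℚ⟦X⟧) * ((X : ℚ⟦X⟧) ^ m) ^ i *
            (u ^ (j - i) * (u ^ i * (u⁻¹) ^ i)) := by
          rw [show u ^ j = u ^ (j - i) * u ^ i from by
            rw [← pow_add]; congr 1; omega,
            show i * m = m * i from by ring, pow_mul]
          ring
      _ = (k.choose i : ℚ⟦X⟧) * ((X : ℚ⟦X⟧) ^ m) ^ i * (1 - (X : ℚ⟦X⟧) ^ m) ^ (j - i) := by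
          rw [← mul_pow, hinv', one_pow, mul_one, hu]
  have hR : u ^ j * ((u⁻¹) ^ j *
      ∑ i ∈ Finset.range (j + 1), ((k - j + i - 1).choose i : ℚ) • (X : ℚ⟦X⟧) ^ (i * m)) =
      ∑ i ∈ Finset.range (j + 1),
        ((k - j + i - 1).choose i : ℚ⟦X⟧) * ((X : ℚ⟦X⟧) ^ m) ^ i := by
    rw [← mul_assoc, ← mul_pow, hinv', one_pow, one_mul]
    apply Finset.sum_congr rfl
    intro i _
    rw [ckj_nat_smul, show i * m = m * i from by ring, pow_mul]
  rw [hL, hR]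
  exact ckj_key_id k j hjk ((X : ℚ⟦X⟧) ^ m)

lemma ckj_master (k j n : ℕ) (hjk : j ≤ k) :
    (∏ m ∈ Finset.Icc 1 n, ∑ i ∈ Finset.range (j + 1),
        (k.choose i : ℚ) • ((X : ℚ⟦X⟧) ^ (i * m) * ((1 - X ^ m)⁻¹) ^ i)) =
      ((∏ m ∈ Finset.Icc 1 n, (1 - (X : ℚ⟦X⟧) ^ m))⁻¹) ^ j *
        ∏ m ∈ Finset.Icc 1 n, ∑ i ∈ Finset.range (j + 1),
          ((k - j + i - 1).choose i : ℚ) • (X : ℚ⟦X⟧) ^ (i * m) := by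
  have hprodinv : (∏ m ∈ Finset.Icc 1 n, (1 - (X : ℚ⟦X⟧) ^ m))⁻¹ =
      ∏ m ∈ Finset.Icc 1 n, ((1 - (X : ℚ⟦X⟧) ^ m))⁻¹ := by
    rw [PowerSeries.inv_eq_iff_mul_eq_one]
    · rw [← Finset.prod_mul_distrib]
      rw [Finset.prod_congr rfl (fun m hm =>
        PowerSeries.inv_mul_cancel _ (ckj_const m (Finset.mem_Icc.mp hm).1))]
      exact Finset.prod_const_one
    · rw [map_prod]
      rw [Finset.prod_congr rfl (fun m hm => by
        rw [map_sub, map_one, map_pow, constantCoeff_X,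
          zero_pow (by have := (Finset.mem_Icc.mp hm).1; omega : m ≠ 0), sub_zero])]
      rw [Finset.prod_const_one]
      norm_num
  rw [hprodinv, ← Finset.prod_pow, ← Finset.prod_mul_distrib]
  exact Finset.prod_congr rfl fun m hm => ckj_factor_eq k j m (Finset.mem_Icc.mp hm).1 hjk

end CkjAux

/-- For `k ≥ j ≥ 1` and `n ≥ 1`, `c_{k,j}(n)` is the coefficient of `qⁿ` in
`(1/(q;q)_∞^j) · Π_{m≥1} ( Σ_{i=0}^{j} C(k−j+i−1, i) q^{i m} )`; that is,
`Π_{m≥1} ( Σ_{i=0}^{j} C(k,i) q^{i m}/(1−q^m)^i )` equals that product.  Since factors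
with `m > n` do not affect the coefficient of `qⁿ`, the infinite products over `m` are
truncated at `m = n`. -/
theorem ckj_gen_fun (k j : ℕ) (hj : 1 ≤ j) (hjk : j ≤ k) (n : ℕ) (hn : 1 ≤ n) :
    (ckj k j n : ℚ) =
      PowerSeries.coeff (R := ℚ) n
        (((∏ m ∈ Finset.Icc 1 n, (1 - (PowerSeries.X : PowerSeries ℚ) ^ m))⁻¹) ^ j *
          ∏ m ∈ Finset.Icc 1 n, ∑ i ∈ Finset.range (j + 1),
            ((k - j + i - 1).choose i : ℚ) • (PowerSeries.X : PowerSeries ℚ) ^ (i * m)) ∧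
    PowerSeries.coeff (R := ℚ) n
        (∏ m ∈ Finset.Icc 1 n, ∑ i ∈ Finset.range (j + 1),
          (k.choose i : ℚ) •
            ((PowerSeries.X : PowerSeries ℚ) ^ (i * m) *
              ((1 - (PowerSeries.X : PowerSeries ℚ) ^ m)⁻¹) ^ i)) =
      PowerSeries.coeff (R := ℚ) n
        (((∏ m ∈ Finset.Icc 1 n, (1 - (PowerSeries.X : PowerSeries ℚ) ^ m))⁻¹) ^ j *
          ∏ m ∈ Finset.Icc 1 n, ∑ i ∈ Finset.range (j + 1),
            ((k - j + i - 1).choose i : ℚ) • (PowerSeries.X : PowerSeries ℚ) ^ (i * m)) := by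
  have hmaster := ckj_master k j n hjk
  constructor
  · rw [← hmaster,
      Finset.prod_congr rfl (fun m hm => ckj_factor k j m (Finset.mem_Icc.mp hm).1),
      ckj_weighted n (ggw k j) (by simp [ggw])]
    rw [ckj]
    push_cast
    apply Finset.sum_congr rfl
    intro P _
    apply Finset.prod_congr rfl
    intro s hs
    rw [ggw, if_neg (Multiset.count_ne_zero.mpr (Multiset.mem_toFinset.mp hs))]
  · rw [hmaster]
end
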